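/- arXiv:1401.4851 — 4 statements merged into one kernel-verified Lean document; each statement's English description precedes it below -/
import Mathlib

section
/- For even k ≥ 2, let H be a k-uniform hypergraph on n vertices with m edges satisfying τ(H) = (n + (k/2)·m)/(3k/2). Then every vertex of H has degree at most 2, i.e., Δ(H) ≤ 2. -/
/-- A hypergraph: a finite vertex set together with a finite (indexed, hence
multiset-like) family of edges, each edge a subset of the vertex set. -/
structure FinHypergraph (V : Type*) where
  verts : Finset V
  numEdges : ℕ
  edge : Fin numEdges → Finset V
  edge_sub : ∀ i, edge i ⊆ verts

namespace FinHypergraph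

variable {V : Type*} [DecidableEq V]

/-- `H` is `k`-uniform if every edge has exactly `k` vertices. -/
def Uniform (H : FinHypergraph V) (k : ℕ) : Prop :=
  ∀ i, (H.edge i).card = k

/-- A transversal: a set of vertices meeting every edge. -/
def IsTransversal (H : FinHypergraph V) (T : Finset V) : Prop :=
  T ⊆ H.verts ∧ ∀ i, (T ∩ H.edge i).Nonempty

/-- The transversal number `τ(H)`: minimum size of a transversal. -/
noncomputable def tau (H : FinHypergraph V) : ℕ :=
  sInf {n | ∃ T : Finset V, H.IsTransversal T ∧ T.card = n}

/-- The degree of a vertex: the number of edges containing it. -/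
def degree (H : FinHypergraph V) (v : V) : ℕ :=
  (Finset.univ.filter fun i => v ∈ H.edge i).card

/-- Two vertices are adjacent if some edge contains both. -/
def Adj (H : FinHypergraph V) (u v : V) : Prop :=
  u ≠ v ∧ ∃ i, u ∈ H.edge i ∧ v ∈ H.edge i

/-- `H` is connected if every pair of vertices is joined by a sequence of
consecutively adjacent vertices. -/
def Connected (H : FinHypergraph V) : Prop :=
  ∀ u ∈ H.verts, ∀ v ∈ H.verts, Relation.ReflTransGen H.Adj u v

/-- `H` is (a copy of) `E_k`: `k` vertices and exactly one edge. -/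
def IsEk (H : FinHypergraph V) (k : ℕ) : Prop :=
  H.verts.card = k ∧ H.numEdges = 1 ∧ ∀ i, H.edge i = H.verts

/-- `H` is (a copy of) the generalized triangle `T_k`: the vertex set is the
disjoint union of sets `A`, `B`, `C`, `D` with `|A| = ⌈k/2⌉`,
`|B| = |C| = ⌊k/2⌋`, `|D| = ⌈k/2⌉ - ⌊k/2⌋`, and the edges are exactly
`A ∪ B`, `A ∪ C` and `B ∪ C ∪ D`. -/
def IsTk (H : FinHypergraph V) (k : ℕ) : Prop :=
  ∃ A B C D : Finset V,
    A.card = (k + 1) / 2 ∧ B.card = k / 2 ∧ C.card = k / 2 ∧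
    D.card = (k + 1) / 2 - k / 2 ∧
    Disjoint A B ∧ Disjoint A C ∧ Disjoint A D ∧
    Disjoint B C ∧ Disjoint B D ∧ Disjoint C D ∧
    H.verts = A ∪ B ∪ C ∪ D ∧
    H.numEdges = 3 ∧
    (List.ofFn H.edge : Multiset (Finset V)) = {A ∪ B, A ∪ C, B ∪ C ∪ D}

end FinHypergraph

namespace FinHypergraph

variable {V : Type*} [DecidableEq V]


def edgesOf (H : FinHypergraph V) (v : V) : Finset (Fin H.numEdges) :=
  Finset.univ.filter fun i => v ∈ H.edge i

lemma degree_eq (H : FinHypergraph V) (v : V) : H.degree v = (H.edgesOf v).card := rfl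

lemma mem_edgesOf {H : FinHypergraph V} {v : V} {i : Fin H.numEdges} :
    i ∈ H.edgesOf v ↔ v ∈ H.edge i := by simp [edgesOf]

lemma tau_le_card {H : FinHypergraph V} {T : Finset V} (hT : H.IsTransversal T) :
    H.tau ≤ T.card := Nat.sInf_le ⟨T, hT, rfl⟩

lemma verts_transversal (H : FinHypergraph V) (hne : ∀ i, (H.edge i).Nonempty) :
    H.IsTransversal H.verts :=
  ⟨Finset.Subset.refl _, fun i => by
    rw [Finset.inter_eq_right.mpr (H.edge_sub i)]; exact hne i⟩

lemma exists_min_transversal (H : FinHypergraph V) (hne : ∀ i, (H.edge i).Nonempty) :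
    ∃ T, H.IsTransversal T ∧ T.card = H.tau :=
  Nat.sInf_mem (s := {n | ∃ T : Finset V, H.IsTransversal T ∧ T.card = n})
    ⟨H.verts.card, H.verts, H.verts_transversal hne, rfl⟩

/-- Delete a vertex and all edges containing it. -/
def del (H : FinHypergraph V) (v : V) : FinHypergraph V where
  verts := H.verts.erase v
  numEdges := (Finset.univ.filter fun i => v ∉ H.edge i).card
  edge := fun j => H.edge ((Finset.univ.filter fun i => v ∉ H.edge i).orderIsoOfFin rfl j)
  edge_sub := fun j => by
    have h := ((Finset.univ.filter fun i => v ∉ H.edge i).orderIsoOfFin rfl j).2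
    rw [Finset.mem_filter] at h
    exact Finset.subset_erase.mpr ⟨H.edge_sub _, h.2⟩

lemma del_uniform (H : FinHypergraph V) (v : V) {k : ℕ} (huni : H.Uniform k) :
    (H.del v).Uniform k := fun _ => huni _

lemma del_numEdges_add (H : FinHypergraph V) (v : V) :
    (H.del v).numEdges + H.degree v = H.numEdges := by
  have h := Finset.card_filter_add_card_filter_not
      (s := (Finset.univ : Finset (Fin H.numEdges))) (p := fun i => v ∉ H.edge i)
  simp only [not_not] at h
  calc (H.del v).numEdges + H.degree v
      = (Finset.univ.filter fun i => v ∉ H.edge i).card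
        + (Finset.univ.filter fun i => v ∈ H.edge i).card := rfl
    _ = (Finset.univ : Finset (Fin H.numEdges)).card := h
    _ = H.numEdges := by simp

lemma del_edge_surj (H : FinHypergraph V) (v : V) {i : Fin H.numEdges} (hi : v ∉ H.edge i) :
    ∃ j, (H.del v).edge j = H.edge i := by
  have his : i ∈ Finset.univ.filter fun i => v ∉ H.edge i := by simp [hi]
  refine ⟨((Finset.univ.filter fun i => v ∉ H.edge i).orderIsoOfFin rfl).symm ⟨i, his⟩, ?_⟩
  show H.edge _ = H.edge i
  rw [OrderIso.apply_symm_apply]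

lemma tau_le_tau_del_add_one (H : FinHypergraph V) {v : V} (hv : v ∈ H.verts)
    (hne : ∀ i, (H.edge i).Nonempty) :
    H.tau ≤ (H.del v).tau + 1 := by
  have hne' : ∀ j, ((H.del v).edge j).Nonempty := fun j => hne _
  obtain ⟨T, hT, hTc⟩ := (H.del v).exists_min_transversal hne'
  have htrans : H.IsTransversal (insert v T) := by
    constructor
    · intro x hx
      rcases Finset.mem_insert.mp hx with h | h
      · exact h ▸ hv
      · exact (Finset.erase_subset _ _) (hT.1 h)
    · intro i
      by_cases hvi : v ∈ H.edge i
      · exact ⟨v, Finset.mem_inter.mpr ⟨Finset.mem_insert_self _ _, hvi⟩⟩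
      · obtain ⟨j, hj⟩ := H.del_edge_surj v hvi
        obtain ⟨x, hx⟩ := hT.2 j
        rw [hj] at hx
        rw [Finset.mem_inter] at hx
        exact ⟨x, Finset.mem_inter.mpr ⟨Finset.mem_insert_of_mem hx.1, hx.2⟩⟩
  calc H.tau ≤ (insert v T).card := tau_le_card htrans
    _ ≤ T.card + 1 := Finset.card_insert_le _ _
    _ = (H.del v).tau + 1 := by rw [hTc]



lemma cm_deg2 {r : ℕ} (hr : 1 ≤ r) (H : FinHypergraph V) (huni : H.Uniform (2*r))
    (hdeg2 : ∀ v ∈ H.verts, H.degree v ≤ 2) :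
    3*r*H.tau ≤ H.verts.card + r*H.numEdges := by
  classical
  set W : Finset V := H.verts.filter (fun v => H.degree v = 2) with hWdef
  have hES : ∀ w ∈ W, (H.edgesOf w).card = 2 := by
    intro w hw
    have h := (Finset.mem_filter.mp hw).2
    rwa [degree_eq] at h
  have hWsub : W ⊆ H.verts := Finset.filter_subset _ _
  -- a maximum matching among degree-2 vertices
  set coll : Finset (Finset V) := W.powerset.filter
      (fun S => ∀ a ∈ S, ∀ b ∈ S, a ≠ b → Disjoint (H.edgesOf a) (H.edgesOf b)) with hcolldef
  have hcoll : coll.Nonempty := ⟨∅, by simp [hcolldef]⟩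
  obtain ⟨S, hSmem, hSmax⟩ := coll.exists_max_image Finset.card hcoll
  have hSW : S ⊆ W := Finset.mem_powerset.mp (Finset.mem_filter.mp hSmem).1
  have hSD : ∀ a ∈ S, ∀ b ∈ S, a ≠ b → Disjoint (H.edgesOf a) (H.edgesOf b) :=
    (Finset.mem_filter.mp hSmem).2
  set I : Finset (Fin H.numEdges) := S.biUnion H.edgesOf with hIdef
  have hIcard : I.card = 2 * S.card := by
    rw [hIdef, Finset.card_biUnion hSD,
      Finset.sum_congr rfl (fun s hs => hES s (hSW hs))]
    simp [mul_comm]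
  -- M1 : every degree-2 vertex meets I
  have hM1 : ∀ w ∈ W, (H.edgesOf w ∩ I).Nonempty := by
    intro w hw
    by_contra hcon
    rw [Finset.not_nonempty_iff_eq_empty, ← Finset.disjoint_iff_inter_eq_empty] at hcon
    have hdisj : ∀ t ∈ S, Disjoint (H.edgesOf w) (H.edgesOf t) := by
      intro t ht
      exact hcon.mono_right (Finset.subset_biUnion_of_mem _ ht)
    have hwne : (H.edgesOf w).Nonempty := by
      rw [← Finset.card_pos, hES w hw]; norm_num
    have hwS : w ∉ S := by
      intro hwS
      have h : H.edgesOf w = ∅ := by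
        have := hdisj w hwS
        rwa [disjoint_self, Finset.bot_eq_empty] at this
      rw [h] at hwne
      exact Finset.not_nonempty_empty hwne
    have hmem : insert w S ∈ coll := by
      rw [hcolldef, Finset.mem_filter, Finset.mem_powerset]
      refine ⟨Finset.insert_subset hw hSW, ?_⟩
      intro a ha b hb hab
      rcases Finset.mem_insert.mp ha with ha' | ha'
      · subst ha'
        rcases Finset.mem_insert.mp hb with hb' | hb'
        · exact absurd hb'.symm hab
        · exact hdisj b hb'
      · rcases Finset.mem_insert.mp hb with hb' | hb'
        · subst hb'
          exact (hdisj a ha').symm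
        · exact hSD a ha' b hb' hab
    have := hSmax _ hmem
    rw [Finset.card_insert_of_notMem hwS] at this
    omega
  -- vertices of W whose edge-pair meets I in exactly one / two indices, at i
  set Wout : Fin H.numEdges → Finset V := fun i =>
    W.filter (fun w => i ∈ H.edgesOf w ∧ (H.edgesOf w ∩ I).card = 1) with hWoutdef
  set Win : Fin H.numEdges → Finset V := fun i =>
    W.filter (fun w => i ∈ H.edgesOf w ∧ (H.edgesOf w ∩ I).card = 2) with hWindef
  have houtsub : ∀ i, Wout i ⊆ H.edge i := by
    intro i w hw
    exact mem_edgesOf.mp (Finset.mem_filter.mp hw).2.1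
  have hinsub : ∀ i, Win i ⊆ H.edge i := by
    intro i w hw
    exact mem_edgesOf.mp (Finset.mem_filter.mp hw).2.1
  have hcard_out_in : ∀ i, (Wout i).card + (Win i).card ≤ 2*r := by
    intro i
    have hdisj : Disjoint (Wout i) (Win i) := by
      rw [Finset.disjoint_left]
      intro a ha hb
      have h1 := (Finset.mem_filter.mp ha).2.2
      have h2 := (Finset.mem_filter.mp hb).2.2
      omega
    rw [← Finset.card_union_of_disjoint hdisj]
    calc (Wout i ∪ Win i).card ≤ (H.edge i).card :=
          Finset.card_le_card (Finset.union_subset (houtsub i) (hinsub i))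
      _ = 2*r := huni i
  -- singleton "outer" endpoint
  have hsd : ∀ w ∈ W, (H.edgesOf w ∩ I).card = 1 → (H.edgesOf w \ I).card = 1 := by
    intro w hw hc
    have h := Finset.card_sdiff_add_card_inter (H.edgesOf w) I
    rw [hc, hES w hw] at h
    omega
  -- the augmenting-path argument
  have hAUG : ∀ s ∈ S, ∀ i j : Fin H.numEdges, i ≠ j →
      i ∈ H.edgesOf s → j ∈ H.edgesOf s →
      ∀ w1 ∈ W, ∀ w2 ∈ W, i ∈ H.edgesOf w1 → (H.edgesOf w1 ∩ I).card = 1 →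
      j ∈ H.edgesOf w2 → (H.edgesOf w2 ∩ I).card = 1 →
      ¬ Disjoint (H.edgesOf w1 \ I) (H.edgesOf w2 \ I) := by
    intro s hs i j hij hi hj w1 hw1 w2 hw2 hiw1 hc1 hjw2 hc2 hdis
    have hiI : i ∈ I := Finset.mem_biUnion.mpr ⟨s, hs, hi⟩
    have hjI : j ∈ I := Finset.mem_biUnion.mpr ⟨s, hs, hj⟩
    have h1 : H.edgesOf w1 ∩ I = {i} := by
      obtain ⟨a, ha⟩ := Finset.card_eq_one.mp hc1
      have : i ∈ H.edgesOf w1 ∩ I := Finset.mem_inter.mpr ⟨hiw1, hiI⟩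
      rw [ha, Finset.mem_singleton] at this
      rw [ha, this]
    have h2 : H.edgesOf w2 ∩ I = {j} := by
      obtain ⟨a, ha⟩ := Finset.card_eq_one.mp hc2
      have : j ∈ H.edgesOf w2 ∩ I := Finset.mem_inter.mpr ⟨hjw2, hjI⟩
      rw [ha, Finset.mem_singleton] at this
      rw [ha, this]
    have hnotS : ∀ w ∈ W, (H.edgesOf w ∩ I).card = 1 → w ∉ S := by
      intro w hw hc hwS
      have hsub : H.edgesOf w ⊆ I := Finset.subset_biUnion_of_mem _ hwS
      rw [Finset.inter_eq_left.mpr hsub, hES w hw] at hc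
      omega
    have hw1S := hnotS w1 hw1 hc1
    have hw2S := hnotS w2 hw2 hc2
    have hne12 : w1 ≠ w2 := by
      rintro rfl
      rw [h1] at h2
      exact hij (Finset.singleton_inj.mp h2)
    -- all needed disjointnesses
    have hd12 : Disjoint (H.edgesOf w1) (H.edgesOf w2) := by
      rw [Finset.disjoint_left]
      intro a ha ha2
      by_cases haI : a ∈ I
      · have e1 : a = i := by
          have : a ∈ H.edgesOf w1 ∩ I := Finset.mem_inter.mpr ⟨ha, haI⟩
          rwa [h1, Finset.mem_singleton] at this
        have e2 : a = j := by
          have : a ∈ H.edgesOf w2 ∩ I := Finset.mem_inter.mpr ⟨ha2, haI⟩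
          rwa [h2, Finset.mem_singleton] at this
        exact hij (e1 ▸ e2)
      · exact Finset.disjoint_left.mp hdis (Finset.mem_sdiff.mpr ⟨ha, haI⟩)
          (Finset.mem_sdiff.mpr ⟨ha2, haI⟩)
    have hdt : ∀ (w : V) (x : Fin H.numEdges), H.edgesOf w ∩ I = {x} → x ∈ H.edgesOf s →
        ∀ t ∈ S, t ≠ s → Disjoint (H.edgesOf w) (H.edgesOf t) := by
      intro w x hwx hxs t ht hts
      rw [Finset.disjoint_left]
      intro a ha hat
      have haI : a ∈ I := Finset.mem_biUnion.mpr ⟨t, ht, hat⟩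
      have : a = x := by
        have : a ∈ H.edgesOf w ∩ I := Finset.mem_inter.mpr ⟨ha, haI⟩
        rwa [hwx, Finset.mem_singleton] at this
      subst this
      exact Finset.disjoint_left.mp (hSD t ht s hs hts) hat hxs
    -- the augmented matching
    have hw2e : w2 ∉ S.erase s := fun h => hw2S (Finset.mem_of_mem_erase h)
    have hw1e : w1 ∉ insert w2 (S.erase s) := by
      intro h
      rcases Finset.mem_insert.mp h with h | h
      · exact hne12 h
      · exact hw1S (Finset.mem_of_mem_erase h)
    have hmem : insert w1 (insert w2 (S.erase s)) ∈ coll := by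
      rw [hcolldef, Finset.mem_filter, Finset.mem_powerset]
      constructor
      · intro a ha
        rcases Finset.mem_insert.mp ha with rfl | ha
        · exact hw1
        rcases Finset.mem_insert.mp ha with rfl | ha
        · exact hw2
        · exact hSW (Finset.mem_of_mem_erase ha)
      · intro a ha b hb hab
        rcases Finset.mem_insert.mp ha with ha1 | ha'
        · subst ha1
          rcases Finset.mem_insert.mp hb with hb1 | hb'
          · exact absurd hb1.symm hab
          rcases Finset.mem_insert.mp hb' with hb2 | hb''
          · subst hb2; exact hd12
          · exact hdt _ i h1 hi b (Finset.mem_of_mem_erase hb'') (Finset.ne_of_mem_erase hb'')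
        rcases Finset.mem_insert.mp ha' with ha2 | ha''
        · subst ha2
          rcases Finset.mem_insert.mp hb with hb1 | hb'
          · subst hb1; exact hd12.symm
          rcases Finset.mem_insert.mp hb' with hb2 | hb''
          · exact absurd hb2.symm hab
          · exact hdt _ j h2 hj b (Finset.mem_of_mem_erase hb'') (Finset.ne_of_mem_erase hb'')
        · rcases Finset.mem_insert.mp hb with hb1 | hb'
          · subst hb1
            exact (hdt _ i h1 hi a (Finset.mem_of_mem_erase ha'') (Finset.ne_of_mem_erase ha'')).symm
          rcases Finset.mem_insert.mp hb' with hb2 | hb''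
          · subst hb2
            exact (hdt _ j h2 hj a (Finset.mem_of_mem_erase ha'') (Finset.ne_of_mem_erase ha'')).symm
          · exact hSD a (Finset.mem_of_mem_erase ha'') b (Finset.mem_of_mem_erase hb'') hab
    have hcard : (insert w1 (insert w2 (S.erase s))).card = S.card + 1 := by
      rw [Finset.card_insert_of_notMem hw1e, Finset.card_insert_of_notMem hw2e,
        Finset.card_erase_of_mem hs]
      have : 1 ≤ S.card := Finset.card_pos.mpr ⟨s, hs⟩
      omega
    have := hSmax _ hmem
    omega
  -- key bound per matching element
  have hC2 : ∀ s ∈ S, ∀ i j : Fin H.numEdges, i ≠ j → H.edgesOf s = {i, j} →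
      (Wout i).card + (Wout j).card ≤ 2*r := by
    intro s hs i j hij hEs
    have hi : i ∈ H.edgesOf s := by rw [hEs]; simp
    have hj : j ∈ H.edgesOf s := by rw [hEs]; simp
    have hiI : i ∈ I := Finset.mem_biUnion.mpr ⟨s, hs, hi⟩
    have hjI : j ∈ I := Finset.mem_biUnion.mpr ⟨s, hs, hj⟩
    rcases Finset.eq_empty_or_nonempty (Wout i) with hemp | ⟨w1, hw1⟩
    · rw [hemp]; simp only [Finset.card_empty, zero_add]
      have := hcard_out_in j; omega
    rcases Finset.eq_empty_or_nonempty (Wout j) with hemp | ⟨w2, hw2⟩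
    · rw [hemp]; simp only [Finset.card_empty, add_zero]
      have := hcard_out_in i; omega
    have hw2' := Finset.mem_filter.mp hw2
    obtain ⟨y, hy⟩ := Finset.card_eq_one.mp (hsd w2 hw2'.1 hw2'.2.2)
    -- every element of Wout i has outer endpoint y
    have hkey1 : ∀ w ∈ Wout i, H.edgesOf w \ I = {y} := by
      intro w hw
      have hw' := Finset.mem_filter.mp hw
      obtain ⟨x, hx⟩ := Finset.card_eq_one.mp (hsd w hw'.1 hw'.2.2)
      have hnd := hAUG s hs i j hij hi hj w hw'.1 w2 hw2'.1 hw'.2.1 hw'.2.2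
        hw2'.2.1 hw2'.2.2
      rw [hx, hy, Finset.disjoint_singleton] at hnd
      rw [hx, not_not.mp hnd]
    obtain ⟨w1', hw1'⟩ : (Wout i).Nonempty := ⟨w1, hw1⟩
    have hw1'' := Finset.mem_filter.mp hw1'
    -- every element of Wout j has outer endpoint y too
    have hkey2 : ∀ w ∈ Wout j, H.edgesOf w \ I = {y} := by
      intro w hw
      have hw' := Finset.mem_filter.mp hw
      obtain ⟨x, hx⟩ := Finset.card_eq_one.mp (hsd w hw'.1 hw'.2.2)
      have hnd := hAUG s hs i j hij hi hj w1' hw1''.1 w hw'.1 hw1''.2.1 hw1''.2.2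
        hw'.2.1 hw'.2.2
      rw [hx, hkey1 w1' hw1', Finset.disjoint_singleton] at hnd
      rw [hx, (not_not.mp hnd)]
    have hsuby : Wout i ∪ Wout j ⊆ H.edge y := by
      intro w hw
      have : y ∈ H.edgesOf w := by
        rcases Finset.mem_union.mp hw with h | h
        · have := hkey1 w h
          have : y ∈ H.edgesOf w \ I := by rw [this]; simp
          exact (Finset.mem_sdiff.mp this).1
        · have := hkey2 w h
          have : y ∈ H.edgesOf w \ I := by rw [this]; simp
          exact (Finset.mem_sdiff.mp this).1
      exact mem_edgesOf.mp this
    have hdisj : Disjoint (Wout i) (Wout j) := by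
      rw [Finset.disjoint_left]
      intro a hai haj
      have h1 := Finset.mem_filter.mp hai
      have h2 := Finset.mem_filter.mp haj
      have : ({i, j} : Finset (Fin H.numEdges)) ⊆ H.edgesOf a ∩ I := by
        intro x hx
        rcases Finset.mem_insert.mp hx with rfl | hx
        · exact Finset.mem_inter.mpr ⟨h1.2.1, hiI⟩
        · rw [Finset.mem_singleton] at hx; subst hx
          exact Finset.mem_inter.mpr ⟨h2.2.1, hjI⟩
      have hle := Finset.card_le_card this
      rw [Finset.card_pair hij] at hle
      omega
    calc (Wout i).card + (Wout j).card = (Wout i ∪ Wout j).card :=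
          (Finset.card_union_of_disjoint hdisj).symm
      _ ≤ (H.edge y).card := Finset.card_le_card hsuby
      _ = 2*r := huni y
  -- the weighted double count : 2|W| = Σ_{i∈I} f i
  set f : Fin H.numEdges → ℕ := fun i => 2*(Wout i).card + (Win i).card with hfdef
  have hstepA : 2 * W.card = ∑ i ∈ I, f i := by
    have hswap1 : ∑ i ∈ I, (Wout i).card
        = ∑ w ∈ W, (I.filter (fun i => i ∈ H.edgesOf w ∧ (H.edgesOf w ∩ I).card = 1)).card := by
      simp only [hWoutdef, Finset.card_filter]
      exact Finset.sum_comm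
    have hswap2 : ∑ i ∈ I, (Win i).card
        = ∑ w ∈ W, (I.filter (fun i => i ∈ H.edgesOf w ∧ (H.edgesOf w ∩ I).card = 2)).card := by
      simp only [hWindef, Finset.card_filter]
      exact Finset.sum_comm
    have hperw : ∀ w ∈ W,
        2*(I.filter (fun i => i ∈ H.edgesOf w ∧ (H.edgesOf w ∩ I).card = 1)).card
          + (I.filter (fun i => i ∈ H.edgesOf w ∧ (H.edgesOf w ∩ I).card = 2)).card = 2 := by
      intro w hw
      have hc1 : 1 ≤ (H.edgesOf w ∩ I).card := Finset.card_pos.mpr (hM1 w hw)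
      have hc2 : (H.edgesOf w ∩ I).card ≤ 2 := by
        calc (H.edgesOf w ∩ I).card ≤ (H.edgesOf w).card :=
              Finset.card_le_card Finset.inter_subset_left
          _ = 2 := hES w hw
      have hfil : ∀ c : ℕ, I.filter (fun i => i ∈ H.edgesOf w ∧ (H.edgesOf w ∩ I).card = c)
          = if (H.edgesOf w ∩ I).card = c then I ∩ H.edgesOf w else ∅ := by
        intro c
        split_ifs with h
        · ext i; simp [Finset.mem_filter, Finset.mem_inter, h]
        · ext i; simp [Finset.mem_filter, h]
      rw [hfil 1, hfil 2]
      rcases (by omega : (H.edgesOf w ∩ I).card = 1 ∨ (H.edgesOf w ∩ I).card = 2) with h | h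
      · rw [if_pos h, if_neg (by omega), Finset.inter_comm I (H.edgesOf w), h]
        simp
      · rw [if_neg (by omega), if_pos h, Finset.inter_comm I (H.edgesOf w), h]
        simp
    calc 2*W.card = ∑ w ∈ W, 2 := by rw [Finset.sum_const]; ring
      _ = ∑ w ∈ W,
          (2*(I.filter (fun i => i ∈ H.edgesOf w ∧ (H.edgesOf w ∩ I).card = 1)).card
            + (I.filter (fun i => i ∈ H.edgesOf w ∧ (H.edgesOf w ∩ I).card = 2)).card) :=
            (Finset.sum_congr rfl hperw).symm
      _ = ∑ i ∈ I, f i := by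
          simp only [hfdef]
          rw [Finset.sum_add_distrib, Finset.sum_add_distrib, ← Finset.mul_sum,
            ← Finset.mul_sum, hswap1, hswap2]
  have hstepB : ∑ i ∈ I, f i = ∑ s ∈ S, ∑ i ∈ H.edgesOf s, f i := by
    rw [hIdef]
    exact Finset.sum_biUnion (fun a ha b hb hab => hSD a ha b hb hab)
  have hstepC : ∀ s ∈ S, ∑ i ∈ H.edgesOf s, f i ≤ 6*r := by
    intro s hs
    obtain ⟨i, j, hij, hEs⟩ := Finset.card_eq_two.mp (hES s (hSW hs))
    rw [hEs, Finset.sum_pair hij]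
    have h1 := hcard_out_in i
    have h2 := hcard_out_in j
    have h3 := hC2 s hs i j hij hEs
    simp only [hfdef]
    omega
  have hWS : 2 * W.card ≤ 6*r*S.card := by
    calc 2*W.card = ∑ s ∈ S, ∑ i ∈ H.edgesOf s, f i := by rw [hstepA, hstepB]
      _ ≤ ∑ s ∈ S, 6*r := Finset.sum_le_sum hstepC
      _ = 6*r*S.card := by rw [Finset.sum_const]; ring
  -- the transversal of size m - |S|
  have hne : ∀ i, (H.edge i).Nonempty := by
    intro i
    rw [← Finset.card_pos, huni i]; omega
  have htau : H.tau + S.card ≤ H.numEdges := by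
    set T : Finset V := S ∪ (Finset.univ.filter (fun i => i ∉ I)).image
        (fun i => (hne i).choose) with hTdef
    have hT : H.IsTransversal T := by
      constructor
      · intro x hx
        rcases Finset.mem_union.mp hx with h | h
        · exact hWsub (hSW h)
        · obtain ⟨i, _, rfl⟩ := Finset.mem_image.mp h
          exact H.edge_sub i (hne i).choose_spec
      · intro i
        by_cases hiI : i ∈ I
        · obtain ⟨s, hs, his⟩ := Finset.mem_biUnion.mp hiI
          exact ⟨s, Finset.mem_inter.mpr
            ⟨Finset.mem_union_left _ hs, mem_edgesOf.mp his⟩⟩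
        · refine ⟨(hne i).choose, Finset.mem_inter.mpr ⟨?_, (hne i).choose_spec⟩⟩
          exact Finset.mem_union_right _ (Finset.mem_image.mpr
            ⟨i, by simp [hiI], rfl⟩)
    have hfc : (Finset.univ.filter (fun i => i ∉ I)).card + I.card = H.numEdges := by
      have h := Finset.card_filter_add_card_filter_not
          (s := (Finset.univ : Finset (Fin H.numEdges))) (p := fun i => i ∈ I)
      have h2 : (Finset.univ.filter (fun i => i ∈ I)) = I := by ext x; simp
      rw [h2] at h
      simpa [add_comm] using h
    have hTcard : T.card ≤ S.card + (Finset.univ.filter (fun i => i ∉ I)).card := by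
      calc T.card ≤ S.card + ((Finset.univ.filter (fun i => i ∉ I)).image
            (fun i => (hne i).choose)).card := Finset.card_union_le _ _
        _ ≤ S.card + (Finset.univ.filter (fun i => i ∉ I)).card := by
            have := Finset.card_image_le (s := Finset.univ.filter (fun i => i ∉ I))
              (f := fun i => (hne i).choose)
            omega
    have := tau_le_card hT
    omega
  -- degree double count : 2r·m ≤ n + |W|
  have hdc : H.numEdges * (2*r) ≤ H.verts.card + W.card := by
    have hdouble : ∑ i : Fin H.numEdges, (H.edge i).card = ∑ v ∈ H.verts, H.degree v := by
      have h1 : ∀ i : Fin H.numEdges, (H.edge i).card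
          = ∑ v ∈ H.verts, (if v ∈ H.edge i then 1 else 0) := by
        intro i
        rw [← Finset.card_filter, Finset.filter_mem_eq_inter,
          Finset.inter_eq_right.mpr (H.edge_sub i)]
      rw [Finset.sum_congr rfl (fun i _ => h1 i), Finset.sum_comm]
      refine Finset.sum_congr rfl fun v _ => ?_
      rw [degree, Finset.card_filter]
    have hL : ∑ i : Fin H.numEdges, (H.edge i).card = H.numEdges * (2*r) := by
      rw [Finset.sum_congr rfl (fun i _ => huni i), Finset.sum_const]
      simp [mul_comm]
    have hR : ∑ v ∈ H.verts, H.degree v ≤ H.verts.card + W.card := by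
      calc ∑ v ∈ H.verts, H.degree v
          ≤ ∑ v ∈ H.verts, (1 + if H.degree v = 2 then 1 else 0) := by
            refine Finset.sum_le_sum fun v hv => ?_
            have := hdeg2 v hv
            split_ifs <;> omega
        _ = H.verts.card + W.card := by
            rw [Finset.sum_add_distrib, Finset.sum_const, ← Finset.card_filter]
            simp [hWdef]
    omega
  -- final assembly
  have hW3 : W.card ≤ 3*r*S.card := by
    have h : 2*W.card ≤ 2*(3*r*S.card) := by
      calc 2*W.card ≤ 6*r*S.card := hWS
        _ = 2*(3*r*S.card) := by ring
    omega
  have hmul : 3*r*(H.tau + S.card) ≤ 3*r*H.numEdges := Nat.mul_le_mul_left _ htau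
  have hdc' : 2*(r*H.numEdges) ≤ H.verts.card + W.card := by
    calc 2*(r*H.numEdges) = H.numEdges*(2*r) := by ring
      _ ≤ H.verts.card + W.card := hdc
  have key : 3*r*H.tau + 2*(r*H.numEdges)
      ≤ (H.verts.card + r*H.numEdges) + 2*(r*H.numEdges) := by
    calc 3*r*H.tau + 2*(r*H.numEdges)
        ≤ 3*r*H.tau + (H.verts.card + W.card) := Nat.add_le_add_left hdc' _
      _ ≤ 3*r*H.tau + (H.verts.card + 3*r*S.card) :=
          Nat.add_le_add_left (Nat.add_le_add_left hW3 _) _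
      _ = H.verts.card + 3*r*(H.tau + S.card) := by ring
      _ ≤ H.verts.card + 3*r*H.numEdges := Nat.add_le_add_left hmul _
      _ = (H.verts.card + r*H.numEdges) + 2*(r*H.numEdges) := by ring
  omega



/-- The Chvátal–McDiarmid bound for even uniformity `k = 2r`. -/
lemma cm {r : ℕ} (hr : 1 ≤ r) : ∀ M : ℕ, ∀ H : FinHypergraph V, H.numEdges = M →
    H.Uniform (2*r) → 3*r*H.tau ≤ H.verts.card + r*H.numEdges := by
  intro M
  induction M using Nat.strong_induction_on with
  | _ M ih =>
    intro H hM huni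
    by_cases h3 : ∃ v ∈ H.verts, 3 ≤ H.degree v
    · obtain ⟨v, hv, hd⟩ := h3
      have hne : ∀ i, (H.edge i).Nonempty := by
        intro i; rw [← Finset.card_pos, huni i]; omega
      have hsum := H.del_numEdges_add v
      have hlt : (H.del v).numEdges < M := by omega
      have hIH := ih _ hlt (H.del v) rfl (H.del_uniform v huni)
      have htle := H.tau_le_tau_del_add_one hv hne
      have hverts : (H.del v).verts.card + 1 = H.verts.card := by
        show (H.verts.erase v).card + 1 = H.verts.card
        rw [Finset.card_erase_of_mem hv]
        have : 1 ≤ H.verts.card := Finset.card_pos.mpr ⟨v, hv⟩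
        omega
      have step1 : 3*r*H.tau ≤ 3*r*(H.del v).tau + 3*r := by
        calc 3*r*H.tau ≤ 3*r*((H.del v).tau + 1) := Nat.mul_le_mul_left _ htle
          _ = 3*r*(H.del v).tau + 3*r := by ring
      have step2 : r*H.numEdges = r*(H.del v).numEdges + r*(H.degree v) := by
        rw [← hsum]; ring
      have step3 : r*3 ≤ r*(H.degree v) := Nat.mul_le_mul_left _ hd
      have step4 : 3*r = r*3 := by ring
      omega
    · push_neg at h3
      exact cm_deg2 hr H huni (fun v hv => by have := h3 v hv; omega)

end FinHypergraph

/-- For even `k ≥ 2`, a `k`-uniform hypergraph achieving equality in the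
Chvátal–McDiarmid bound has maximum degree at most `2`. -/
theorem stmt11 {V : Type*} [DecidableEq V] (k n m : ℕ) (hk : 2 ≤ k)
    (hke : Even k) (H : FinHypergraph V) (huni : H.Uniform k)
    (hn : H.verts.card = n) (hm : H.numEdges = m)
    (heq : (H.tau : ℚ) = ((n : ℚ) + ((k / 2 : ℕ) : ℚ) * (m : ℚ)) / ((3 * k / 2 : ℕ) : ℚ)) :
    ∀ v ∈ H.verts, H.degree v ≤ 2 := by
  obtain ⟨t, htk⟩ := hke
  have hr : 1 ≤ t := by omega
  have hk2 : k = 2*t := by omega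
  have huni' : H.Uniform (2*t) := by rw [← hk2]; exact huni
  have hd1 : k / 2 = t := by omega
  have hd2 : 3 * k / 2 = 3*t := by omega
  rw [hd1, hd2] at heq
  have h3t : ((3*t : ℕ) : ℚ) ≠ 0 := by
    have : (0:ℕ) < 3*t := by omega
    exact_mod_cast this.ne'
  have hnat : 3*t*H.tau = n + t*m := by
    have hq : (H.tau : ℚ) * ((3*t : ℕ) : ℚ) = (n : ℚ) + ((t : ℕ) : ℚ) * (m : ℚ) := by
      rw [heq, div_mul_cancel₀]
      exact h3t
    have hq2 : ((3*t*H.tau : ℕ) : ℚ) = ((n + t*m : ℕ) : ℚ) := by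
      push_cast
      push_cast at hq
      linarith
    exact_mod_cast hq2
  intro v hv
  by_contra hcon
  have hd : 3 ≤ H.degree v := by omega
  have hne : ∀ i, (H.edge i).Nonempty := by
    intro i; rw [← Finset.card_pos, huni i]; omega
  have hsum := H.del_numEdges_add v
  have hIH := FinHypergraph.cm hr (H.del v).numEdges (H.del v) rfl (H.del_uniform v huni')
  have htle := H.tau_le_tau_del_add_one hv hne
  have hverts : (H.del v).verts.card + 1 = H.verts.card := by
    show (H.verts.erase v).card + 1 = H.verts.card
    rw [Finset.card_erase_of_mem hv]
    have : 1 ≤ H.verts.card := Finset.card_pos.mpr ⟨v, hv⟩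
    omega
  have step1 : 3*t*H.tau ≤ 3*t*(H.del v).tau + 3*t := by
    calc 3*t*H.tau ≤ 3*t*((H.del v).tau + 1) := Nat.mul_le_mul_left _ htle
      _ = 3*t*(H.del v).tau + 3*t := by ring
  have step2 : t*m = t*(H.del v).numEdges + t*(H.degree v) := by
    rw [← hm, ← hsum]; ring
  have step3 : t*3 ≤ t*(H.degree v) := Nat.mul_le_mul_left _ hd
  have step4 : 3*t = t*3 := by ring
  have hn1 : 1 ≤ n := by rw [← hn]; exact Finset.card_pos.mpr ⟨v, hv⟩
  rw [hn] at hverts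
  omega
end

section
/- Let k ≥ 2 and let H be a k-uniform hypergraph with m edges in which every vertex has degree 1 or 2. Let G be the multigraph whose vertices are the edges of H and which has one edge joining e and f for every vertex of H of degree 2 contained in both e and f. Then τ(H) ≤ m − α'(G). -/
/-- A hypergraph: a finite vertex set together with a finite (indexed, hence
multiset-like) family of edges, each edge a subset of the vertex set. -/
structure IdxHypergraph (V : Type*) where
  verts : Finset V
  numEdges : ℕ
  edge : Fin numEdges → Finset V
  edge_sub : ∀ i, edge i ⊆ verts

namespace IdxHypergraph

variable {V : Type*} [DecidableEq V]

/-- `H` is `k`-uniform if every edge has exactly `k` vertices. -/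
def Uniform (H : IdxHypergraph V) (k : ℕ) : Prop :=
  ∀ i, (H.edge i).card = k

/-- A transversal: a set of vertices meeting every edge. -/
def IsTransversal (H : IdxHypergraph V) (T : Finset V) : Prop :=
  T ⊆ H.verts ∧ ∀ i, (T ∩ H.edge i).Nonempty

/-- The transversal number `τ(H)`: minimum size of a transversal. -/
noncomputable def tau (H : IdxHypergraph V) : ℕ :=
  sInf {n | ∃ T : Finset V, H.IsTransversal T ∧ T.card = n}

/-- The degree of a vertex: the number of edges containing it. -/
def degree (H : IdxHypergraph V) (v : V) : ℕ :=
  (Finset.univ.filter fun i => v ∈ H.edge i).card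

/-- Two vertices are adjacent if some edge contains both. -/
def Adj (H : IdxHypergraph V) (u v : V) : Prop :=
  u ≠ v ∧ ∃ i, u ∈ H.edge i ∧ v ∈ H.edge i

/-- `H` is connected if every pair of vertices is joined by a sequence of
consecutively adjacent vertices. -/
def Connected (H : IdxHypergraph V) : Prop :=
  ∀ u ∈ H.verts, ∀ v ∈ H.verts, Relation.ReflTransGen H.Adj u v

/-- `H` is (a copy of) `E_k`: `k` vertices and exactly one edge. -/
def IsEk (H : IdxHypergraph V) (k : ℕ) : Prop :=
  H.verts.card = k ∧ H.numEdges = 1 ∧ ∀ i, H.edge i = H.verts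

/-- `H` is (a copy of) the generalized triangle `T_k`: the vertex set is the
disjoint union of sets `A`, `B`, `C`, `D` with `|A| = ⌈k/2⌉`,
`|B| = |C| = ⌊k/2⌋`, `|D| = ⌈k/2⌉ - ⌊k/2⌋`, and the edges are exactly
`A ∪ B`, `A ∪ C` and `B ∪ C ∪ D`. -/
def IsTk (H : IdxHypergraph V) (k : ℕ) : Prop :=
  ∃ A B C D : Finset V,
    A.card = (k + 1) / 2 ∧ B.card = k / 2 ∧ C.card = k / 2 ∧
    D.card = (k + 1) / 2 - k / 2 ∧
    Disjoint A B ∧ Disjoint A C ∧ Disjoint A D ∧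
    Disjoint B C ∧ Disjoint B D ∧ Disjoint C D ∧
    H.verts = A ∪ B ∪ C ∪ D ∧
    H.numEdges = 3 ∧
    (List.ofFn H.edge : Multiset (Finset V)) = {A ∪ B, A ∪ C, B ∪ C ∪ D}

end IdxHypergraph
/-- A multigraph: a finite vertex set together with symmetric, loopless
edge multiplicities supported on the vertex set. -/
structure Multigraph (V : Type*) where
  verts : Finset V
  mult : V → V → ℕ
  symm : ∀ u v, mult u v = mult v u
  loopless : ∀ v, mult v v = 0
  supp : ∀ u v, mult u v ≠ 0 → u ∈ verts ∧ v ∈ verts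

namespace Multigraph

variable {V : Type*}

/-- The number of edges of `G` (counted with multiplicity). -/
def edgeCount (G : Multigraph V) : ℕ :=
  (∑ u ∈ G.verts, ∑ v ∈ G.verts, G.mult u v) / 2

/-- The degree of a vertex: the sum of the multiplicities of edges at it. -/
def degree (G : Multigraph V) (v : V) : ℕ :=
  ∑ u ∈ G.verts, G.mult v u

/-- The maximum degree `Δ(G)`. -/
def maxDegree (G : Multigraph V) : ℕ :=
  G.verts.sup G.degree

/-- A matching: a set of edges (each recorded as an ordered pair of its
endpoints, present in the multigraph) that pairwise share no endpoint. -/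
def IsMatching (G : Multigraph V) (M : Finset (V × V)) : Prop :=
  (∀ p ∈ M, 0 < G.mult p.1 p.2) ∧
    ∀ p ∈ M, ∀ q ∈ M, p ≠ q →
      p.1 ≠ q.1 ∧ p.1 ≠ q.2 ∧ p.2 ≠ q.1 ∧ p.2 ≠ q.2

/-- The matching number `α'(G)`: the maximum size of a matching. -/
noncomputable def matchingNumber (G : Multigraph V) : ℕ :=
  sSup {n | ∃ M : Finset (V × V), G.IsMatching M ∧ M.card = n}

/-- `G` is connected if every pair of vertices is joined by a path. -/
def Connected (G : Multigraph V) : Prop :=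
  ∀ u ∈ G.verts, ∀ v ∈ G.verts,
    Relation.ReflTransGen (fun a b => 0 < G.mult a b) u v

/-- `G` is a Shannon multigraph of degree `d`: three vertices `x, y, z` with
`μ(xy) = μ(xz) = ⌊d/2⌋` and `μ(yz) = ⌈d/2⌉`. -/
def IsShannon [DecidableEq V] (G : Multigraph V) (d : ℕ) : Prop :=
  ∃ x y z : V, x ≠ y ∧ x ≠ z ∧ y ≠ z ∧ G.verts = {x, y, z} ∧
    G.mult x y = d / 2 ∧ G.mult x z = d / 2 ∧ G.mult y z = (d + 1) / 2

/-- A proper edge coloring of `G` with colors from `Fin c`: each pair of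
vertices receives a set of colors of size equal to its multiplicity (one color
per parallel edge, so parallel edges get distinct colors), symmetrically, and
edges sharing an endpoint get disjoint color sets. -/
def IsProperEdgeColoring (G : Multigraph V) {c : ℕ}
    (f : V → V → Finset (Fin c)) : Prop :=
  (∀ u v, f u v = f v u) ∧ (∀ u v, (f u v).card = G.mult u v) ∧
    ∀ u v w, v ≠ w → Disjoint (f u v) (f u w)

/-- The chromatic index `χ'(G)`: minimum number of colors in a proper edge
coloring. -/
noncomputable def chromaticIndex (G : Multigraph V) : ℕ :=
  sInf {c | ∃ f : V → V → Finset (Fin c), G.IsProperEdgeColoring f}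

/-- The number of edges of `G` receiving color `i` in the coloring `f`. -/
def colorClassSize (G : Multigraph V) {c : ℕ}
    (f : V → V → Finset (Fin c)) (i : Fin c) : ℕ :=
  (∑ u ∈ G.verts, ∑ v ∈ G.verts, if i ∈ f u v then 1 else 0) / 2

end Multigraph

/-- For `k ≥ 2`, let `H` be a `k`-uniform hypergraph with `m` edges in which
every vertex has degree `1` or `2`, and let `G` be the multigraph whose
vertices are the edges of `H`, with one edge joining `e` and `f` for every
degree-`2` vertex of `H` lying in both `e` and `f`. Then
`τ(H) ≤ m - α'(G)`. -/
theorem stmt15 {V : Type*} [DecidableEq V] (k : ℕ) (hk : 2 ≤ k)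
    (H : IdxHypergraph V) (huni : H.Uniform k)
    (hdeg : ∀ v ∈ H.verts, H.degree v = 1 ∨ H.degree v = 2)
    (G : Multigraph (Fin H.numEdges))
    (hGv : G.verts = Finset.univ)
    (hGm : ∀ i j, i ≠ j → G.mult i j =
      (H.verts.filter fun v =>
        H.degree v = 2 ∧ v ∈ H.edge i ∧ v ∈ H.edge j).card) :
    H.tau ≤ H.numEdges - G.matchingNumber := by
  classical
  set S := {n | ∃ M : Finset (Fin H.numEdges × Fin H.numEdges), G.IsMatching M ∧ M.card = n} with hS
  have hbdd : BddAbove S := by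
    refine ⟨H.numEdges, ?_⟩
    rintro n ⟨M, hM, rfl⟩
    have hinj : Set.InjOn (fun p : Fin H.numEdges × Fin H.numEdges => p.1) M := by
      intro p hp q hq hpq
      by_contra hne
      exact ((hM.2 p hp q hq hne).1) hpq
    calc M.card = (M.image (fun p => p.1)).card := (Finset.card_image_of_injOn hinj).symm
      _ ≤ (Finset.univ : Finset (Fin H.numEdges)).card := Finset.card_le_card (Finset.subset_univ _)
      _ = H.numEdges := by simp
  have h0 : (0 : ℕ) ∈ S := ⟨∅, ⟨by simp, by simp⟩, by simp⟩
  have hmem : G.matchingNumber ∈ S := Nat.sSup_mem ⟨0, h0⟩ hbdd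
  obtain ⟨M, hM, hMcard⟩ := hmem
  set n := G.matchingNumber with hn
  -- distinct endpoints and choice of covering vertex for each matched pair
  have hne : ∀ p ∈ M, p.1 ≠ p.2 := by
    intro p hp h
    have := hM.1 p hp
    rw [h, G.loopless] at this
    exact absurd this (lt_irrefl 0)
  have hex : ∀ p ∈ M, ∃ v, v ∈ H.verts ∧ v ∈ H.edge p.1 ∧ v ∈ H.edge p.2 := by
    intro p hp
    have hpos := hM.1 p hp
    rw [hGm p.1 p.2 (hne p hp)] at hpos
    obtain ⟨v, hv⟩ := Finset.card_pos.mp hpos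
    simp only [Finset.mem_filter] at hv
    exact ⟨v, hv.1, hv.2.2⟩
  -- choice of a vertex in each edge
  have hedgene : ∀ i : Fin H.numEdges, (H.edge i).Nonempty := by
    intro i
    rw [← Finset.card_pos, huni i]; omega
  set wf : Fin H.numEdges → V := fun i => (hedgene i).choose with hwf
  have hwmem : ∀ i, wf i ∈ H.edge i := fun i => (hedgene i).choose_spec
  set vf : {p // p ∈ M} → V := fun p => (hex p.1 p.2).choose with hvf
  have hvspec : ∀ p : {p // p ∈ M},
      vf p ∈ H.verts ∧ vf p ∈ H.edge p.1.1 ∧ vf p ∈ H.edge p.1.2 :=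
    fun p => (hex p.1 p.2).choose_spec
  set C : Finset (Fin H.numEdges) := M.biUnion (fun p => {p.1, p.2}) with hC
  set T : Finset V := M.attach.image vf ∪ (Finset.univ \ C).image wf with hT
  have htrans : H.IsTransversal T := by
    constructor
    · intro v hv
      rw [hT] at hv
      rcases Finset.mem_union.mp hv with h | h
      · obtain ⟨p, _, rfl⟩ := Finset.mem_image.mp h
        exact (hvspec p).1
      · obtain ⟨i, _, rfl⟩ := Finset.mem_image.mp h
        exact H.edge_sub i (hwmem i)
    · intro i
      by_cases hi : i ∈ C
      · rw [hC] at hi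
        obtain ⟨p, hp, hip⟩ := Finset.mem_biUnion.mp hi
        refine ⟨vf ⟨p, hp⟩, Finset.mem_inter.mpr ⟨?_, ?_⟩⟩
        · exact Finset.mem_union_left _ (Finset.mem_image.mpr ⟨⟨p, hp⟩, Finset.mem_attach _ _, rfl⟩)
        · rcases Finset.mem_insert.mp hip with h | h
          · rw [h]; exact (hvspec ⟨p, hp⟩).2.1
          · rw [Finset.mem_singleton.mp h]; exact (hvspec ⟨p, hp⟩).2.2
      · refine ⟨wf i, Finset.mem_inter.mpr ⟨?_, hwmem i⟩⟩
        exact Finset.mem_union_right _ (Finset.mem_image.mpr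
          ⟨i, Finset.mem_sdiff.mpr ⟨Finset.mem_univ _, hi⟩, rfl⟩)
  have hCcard : C.card = 2 * n := by
    rw [hC, Finset.card_biUnion]
    · rw [← hMcard, Finset.sum_congr rfl (fun p hp => ?_), Finset.sum_const, smul_eq_mul,
        mul_comm]
      rw [Finset.card_insert_of_notMem (by simp [hne p hp]), Finset.card_singleton]
    · intro p hp q hq hpq
      have h := hM.2 p hp q hq hpq
      simp only [Finset.disjoint_insert_left, Finset.disjoint_singleton_left,
        Finset.mem_insert, Finset.mem_singleton]
      push_neg
      exact ⟨⟨h.1, h.2.1⟩, h.2.2.1, h.2.2.2⟩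
  have hCle : C.card ≤ H.numEdges := by
    calc C.card ≤ (Finset.univ : Finset (Fin H.numEdges)).card := Finset.card_le_card (Finset.subset_univ _)
      _ = H.numEdges := by simp
  have hTcard : T.card ≤ H.numEdges - n := by
    calc T.card ≤ (M.attach.image vf).card + ((Finset.univ \ C).image wf).card :=
          Finset.card_union_le _ _
      _ ≤ M.attach.card + (Finset.univ \ C).card :=
          add_le_add (Finset.card_image_le) (Finset.card_image_le)
      _ = n + (H.numEdges - 2 * n) := by
          rw [Finset.card_attach, hMcard, Finset.card_sdiff_of_subset (Finset.subset_univ _), hCcard]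
          simp
      _ ≤ H.numEdges - n := by omega
  have : H.tau ≤ T.card := Nat.sInf_le ⟨T, htrans, rfl⟩
  omega
end

section
/- Let k ≥ 2 and let H be a k-uniform hypergraph on n vertices with m edges in which every vertex has degree 1 or 2. Then the number of vertices of H of degree 2 equals k·m − n, and consequently τ(H) ≤ m − (k·m − n)/⌊3k/2⌋ = (n + ⌊k/2⌋·m)/⌊3k/2⌋ when k is even, and the same bound τ(H) ≤ (n + ⌊k/2⌋·m)/⌊3k/2⌋ holds when k is odd. -/
section Matching
variable {α ι : Type*} [DecidableEq α] [DecidableEq ι]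

theorem exists_big_matching (k : ℕ) (hk : 2 ≤ k) (W : Finset α) (f : α → Finset ι)
    (h2 : ∀ w ∈ W, (f w).card = 2)
    (hdeg : ∀ i : ι, (W.filter fun w => i ∈ f w).card ≤ k) :
    ∃ S ⊆ W, (∀ w ∈ S, ∀ w' ∈ S, w ≠ w' → Disjoint (f w) (f w')) ∧
      W.card ≤ (3 * k / 2) * S.card := by
  obtain ⟨S, hSmem, hSmax⟩ := Finset.exists_max_image
    (W.powerset.filter (fun S => ∀ w ∈ S, ∀ w' ∈ S, w ≠ w' → Disjoint (f w) (f w')))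
    Finset.card ⟨∅, by simp⟩
  rw [Finset.mem_filter, Finset.mem_powerset] at hSmem
  obtain ⟨hSW, hSm⟩ := hSmem
  refine ⟨S, hSW, hSm, ?_⟩
  have hmax : ∀ S' : Finset α, S' ⊆ W →
      (∀ w ∈ S', ∀ w' ∈ S', w ≠ w' → Disjoint (f w) (f w')) → S'.card ≤ S.card := by
    intro S' h1 h2'
    exact hSmax S' (by rw [Finset.mem_filter, Finset.mem_powerset]; exact ⟨h1, h2'⟩)
  -- the master exchange lemma
  have exch : ∀ (P F : Finset α), P ⊆ S → F ⊆ W →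
      (∀ w ∈ F, ∀ w' ∈ F, w ≠ w' → Disjoint (f w) (f w')) →
      (∀ w ∈ F, ∀ s' ∈ S, s' ∉ P → Disjoint (f w) (f s')) →
      F.card ≤ P.card := by
    intro P F hPS hFW hFm hFext
    by_contra hlt
    push_neg at hlt
    have hdisj : Disjoint (S \ P) F := by
      rw [Finset.disjoint_right]
      intro w hwF hwS
      rw [Finset.mem_sdiff] at hwS
      have h0 := hFext w hwF w hwS.1 hwS.2
      rw [disjoint_self, Finset.bot_eq_empty] at h0
      have := h2 w (hFW hwF)
      rw [h0] at this
      simp at this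
    have hm' : ∀ w ∈ (S \ P) ∪ F, ∀ w' ∈ (S \ P) ∪ F, w ≠ w' → Disjoint (f w) (f w') := by
      intro a ha b hb hne
      rcases Finset.mem_union.mp ha with ha | ha <;> rcases Finset.mem_union.mp hb with hb | hb
      · exact hSm a (Finset.mem_sdiff.mp ha).1 b (Finset.mem_sdiff.mp hb).1 hne
      · exact (hFext b hb a (Finset.mem_sdiff.mp ha).1 (Finset.mem_sdiff.mp ha).2).symm
      · exact hFext a ha b (Finset.mem_sdiff.mp hb).1 (Finset.mem_sdiff.mp hb).2
      · exact hFm a ha b hb hne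
    have hsub : (S \ P) ∪ F ⊆ W := by
      intro a ha
      rcases Finset.mem_union.mp ha with ha | ha
      · exact hSW (Finset.mem_sdiff.mp ha).1
      · exact hFW ha
    have := hmax _ hsub hm'
    rw [Finset.card_union_of_disjoint hdisj, Finset.card_sdiff_of_subset hPS] at this
    have hPcard : P.card ≤ S.card := Finset.card_le_card hPS
    omega
  set VS := S.biUnion f with hVS
  have hfsub : ∀ s ∈ S, f s ⊆ VS := fun s hs => Finset.subset_biUnion_of_mem f hs
  set d : ι → ℕ := fun i => (W.filter fun w => i ∈ f w).card with hdd
  have hdk : ∀ i, d i ≤ k := by intro i; rw [hdd]; exact hdeg i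
  have huniq : ∀ {i : ι} {s s' : α}, s ∈ S → s' ∈ S → i ∈ f s → i ∈ f s' → s = s' := by
    intro i s s' hs hs' hi hi'
    by_contra hne
    exact Finset.disjoint_left.mp (hSm s hs s' hs' hne) hi hi'
  have hF1 : ∀ w ∈ W, 1 ≤ (f w ∩ VS).card := by
    intro w hw
    rcases Finset.eq_empty_or_nonempty (f w ∩ VS) with he | hne
    · exfalso
      have hd2 : Disjoint (f w) VS := Finset.disjoint_iff_inter_eq_empty.mpr he
      have := exch ∅ {w} (Finset.empty_subset _) (by simpa using hw)
        (by intro a ha b hb hab; simp only [Finset.mem_singleton] at ha hb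
            subst ha; subst hb; exact absurd rfl hab)
        (by
          intro a ha s' hs' _
          simp only [Finset.mem_singleton] at ha; subst ha
          exact hd2.mono_right (hfsub s' hs'))
      simp at this
    · exact Finset.card_pos.mpr hne
  have hle2 : ∀ w ∈ W, (f w ∩ VS).card ≤ 2 := by
    intro w hw
    calc (f w ∩ VS).card ≤ (f w).card := Finset.card_le_card Finset.inter_subset_left
      _ = 2 := h2 w hw
  set OUT := W.filter (fun w => (f w ∩ VS).card = 1) with hOUT
  have hcount1 : 2 * W.card = (∑ i ∈ VS, d i) + OUT.card := by
    have e1 : ∑ i ∈ VS, d i = ∑ w ∈ W, (f w ∩ VS).card := by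
      simp_rw [hdd, Finset.card_filter]
      rw [Finset.sum_comm]
      refine Finset.sum_congr rfl fun w _ => ?_
      rw [← Finset.card_filter]
      congr 1
      ext i
      simp [Finset.mem_filter, and_comm]
    have e2 : OUT.card = ∑ w ∈ W, if (f w ∩ VS).card = 1 then 1 else 0 := by
      rw [hOUT, Finset.card_filter]
    rw [e1, e2, ← Finset.sum_add_distrib]
    calc 2 * W.card = ∑ w ∈ W, 2 := by rw [Finset.sum_const, smul_eq_mul, mul_comm]
      _ = _ := by
          refine Finset.sum_congr rfl fun w hw => ?_
          have h1 := hF1 w hw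
          have h22 := hle2 w hw
          split_ifs with h <;> omega
  have hsum_pairs : ∑ i ∈ VS, d i = ∑ s ∈ S, ∑ i ∈ f s, d i := by
    rw [hVS]
    exact Finset.sum_biUnion (fun x hx y hy hxy => hSm x hx y hy hxy)
  have htouch : ∀ w ∈ OUT, (S.filter fun s => ¬ Disjoint (f w) (f s)).card = 1 := by
    intro w hw
    rw [hOUT, Finset.mem_filter] at hw
    obtain ⟨x, hx⟩ := Finset.card_eq_one.mp hw.2
    have hxmem : x ∈ f w ∩ VS := hx ▸ Finset.mem_singleton_self x
    have hxw : x ∈ f w := (Finset.mem_inter.mp hxmem).1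
    have hxVS : x ∈ VS := (Finset.mem_inter.mp hxmem).2
    rw [hVS] at hxVS
    obtain ⟨s0, hs0S, hs0x⟩ := Finset.mem_biUnion.mp hxVS
    rw [Finset.card_eq_one]
    refine ⟨s0, ?_⟩
    ext s
    simp only [Finset.mem_filter, Finset.mem_singleton]
    constructor
    · rintro ⟨hsS, hnd⟩
      obtain ⟨j, hjw, hjs⟩ := Finset.not_disjoint_iff.mp hnd
      have hjVS : j ∈ f w ∩ VS := Finset.mem_inter.mpr ⟨hjw, hfsub s hsS hjs⟩
      rw [hx, Finset.mem_singleton] at hjVS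
      subst hjVS
      exact huniq hsS hs0S hjs hs0x
    · rintro rfl
      exact ⟨hs0S, Finset.not_disjoint_iff.mpr ⟨x, hxw, hs0x⟩⟩
  have hOUTsum : ∑ s ∈ S, (OUT.filter fun w => ¬ Disjoint (f w) (f s)).card = OUT.card := by
    calc ∑ s ∈ S, (OUT.filter fun w => ¬ Disjoint (f w) (f s)).card
        = ∑ s ∈ S, ∑ w ∈ OUT, if ¬ Disjoint (f w) (f s) then 1 else 0 := by
          simp_rw [Finset.card_filter]
      _ = ∑ w ∈ OUT, ∑ s ∈ S, if ¬ Disjoint (f w) (f s) then 1 else 0 := Finset.sum_comm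
      _ = ∑ w ∈ OUT, (S.filter fun s => ¬ Disjoint (f w) (f s)).card := by
          simp_rw [Finset.card_filter]
      _ = ∑ w ∈ OUT, 1 := Finset.sum_congr rfl (fun w hw => htouch w hw)
      _ = OUT.card := (Finset.card_eq_sum_ones _).symm
  have hmaster : 2 * W.card =
      ∑ s ∈ S, ((∑ i ∈ f s, d i) + (OUT.filter fun w => ¬ Disjoint (f w) (f s)).card) := by
    rw [Finset.sum_add_distrib, ← hsum_pairs, hOUTsum, hcount1]
  set OutS : α → Finset α := fun s => OUT.filter (fun w => ¬ Disjoint (f w) (f s)) with hOutS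
  -- representation of out-edges
  have hpt : ∀ w ∈ OUT, ∃ x u, f w ∩ VS = {x} ∧ u ∉ VS ∧ x ≠ u ∧ f w = {x, u} := by
    intro w hw
    rw [hOUT, Finset.mem_filter] at hw
    obtain ⟨x, hx⟩ := Finset.card_eq_one.mp hw.2
    have hxw : x ∈ f w := (Finset.mem_inter.mp (hx ▸ Finset.mem_singleton_self x)).1
    obtain ⟨a, b, hab, hfw⟩ := Finset.card_eq_two.mp (h2 w hw.1)
    have hxab : x = a ∨ x = b := by
      have := hxw
      rw [hfw, Finset.mem_insert, Finset.mem_singleton] at this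
      exact this
    rcases hxab with rfl | rfl
    · refine ⟨x, b, hx, ?_, hab, hfw⟩
      intro hbVS
      have : b ∈ f w ∩ VS := Finset.mem_inter.mpr ⟨by rw [hfw]; simp, hbVS⟩
      rw [hx, Finset.mem_singleton] at this
      exact hab this.symm
    · refine ⟨x, a, hx, ?_, hab.symm, by rw [hfw]; exact Finset.pair_comm a x⟩
      intro haVS
      have : a ∈ f w ∩ VS := Finset.mem_inter.mpr ⟨by rw [hfw]; simp, haVS⟩
      rw [hx, Finset.mem_singleton] at this
      exact hab this
  -- an out-edge of s meets VS only inside f s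
  have htouch_sub : ∀ s ∈ S, ∀ w ∈ OutS s, f w ∩ VS ⊆ f s := by
    intro s hs w hw
    rw [hOutS, Finset.mem_filter] at hw
    obtain ⟨j, hjw, hjs⟩ := Finset.not_disjoint_iff.mp hw.2
    obtain ⟨x, u, hx, _, _, _⟩ := hpt w hw.1
    have : j ∈ f w ∩ VS := Finset.mem_inter.mpr ⟨hjw, hfsub s hs hjs⟩
    rw [hx, Finset.mem_singleton] at this
    subst this
    rw [hx]
    intro z hz
    rw [Finset.mem_singleton] at hz
    subst hz
    exact hjs
  -- out-edges are disjoint from all other pairs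
  have hext : ∀ s ∈ S, ∀ w ∈ OutS s, ∀ s' ∈ S, s' ≠ s → Disjoint (f w) (f s') := by
    intro s hs w hw s' hs' hne
    by_contra hnd
    obtain ⟨j, hjw, hjs'⟩ := Finset.not_disjoint_iff.mp hnd
    have hjfs : j ∈ f s := htouch_sub s hs w hw
      (Finset.mem_inter.mpr ⟨hjw, hfsub s' hs' hjs'⟩)
    exact hne (huniq hs' hs hjs' hjfs)
  -- the E2 exchange: two out-edges of s at different attachment points intersect
  have hE2 : ∀ s ∈ S, ∀ w ∈ OutS s, ∀ w' ∈ OutS s, ∀ x x' : ι,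
      f w ∩ VS = {x} → f w' ∩ VS = {x'} → x ≠ x' → ¬ Disjoint (f w) (f w') := by
    intro s hs w hw w' hw' x x' hx hx' hxx hdisj
    have hwne : w ≠ w' := by
      rintro rfl
      rw [hx] at hx'
      exact hxx (Finset.singleton_injective hx')
    have hwW : w ∈ W := by
      rw [hOutS, Finset.mem_filter, hOUT, Finset.mem_filter] at hw
      exact hw.1.1
    have hw'W : w' ∈ W := by
      rw [hOutS, Finset.mem_filter, hOUT, Finset.mem_filter] at hw'
      exact hw'.1.1
    have := exch {s} {w, w'} (Finset.singleton_subset_iff.mpr hs)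
      (by
        intro a ha
        rcases Finset.mem_insert.mp ha with rfl | ha
        · exact hwW
        · rw [Finset.mem_singleton] at ha; subst ha; exact hw'W)
      (by
        intro a ha b hb hab
        simp only [Finset.mem_insert, Finset.mem_singleton] at ha hb
        rcases ha with rfl | rfl <;> rcases hb with rfl | rfl
        · exact absurd rfl hab
        · exact hdisj
        · exact hdisj.symm
        · exact absurd rfl hab)
      (by
        intro a ha s' hs' hs's
        rw [Finset.mem_singleton] at hs's
        simp only [Finset.mem_insert, Finset.mem_singleton] at ha
        rcases ha with rfl | rfl
        · exact hext s hs a hw s' hs' hs's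
        · exact hext s hs a hw' s' hs' hs's)
    rw [Finset.card_singleton, Finset.card_insert_of_notMem (by simpa using hwne),
      Finset.card_singleton] at this
    omega
  -- out edges are in W
  have hOutW : ∀ s ∈ S, ∀ w ∈ OutS s, w ∈ W := by
    intro s hs w hw
    rw [hOutS, Finset.mem_filter, hOUT, Finset.mem_filter] at hw
    exact hw.1.1
  have hOutOUT : ∀ s ∈ S, ∀ w ∈ OutS s, w ∈ OUT := by
    intro s hs w hw
    rw [hOutS, Finset.mem_filter] at hw
    exact hw.1
  -- dichotomy: every out-edge of s contains one of its two endpoints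
  have hdich : ∀ s ∈ S, ∀ x y : ι, f s = {x, y} → ∀ w ∈ OutS s, x ∈ f w ∨ y ∈ f w := by
    intro s hs x y hfs w hw
    rw [hOutS, Finset.mem_filter] at hw
    obtain ⟨j, hjw, hjs⟩ := Finset.not_disjoint_iff.mp hw.2
    rw [hfs, Finset.mem_insert, Finset.mem_singleton] at hjs
    rcases hjs with rfl | rfl
    · exact Or.inl hjw
    · exact Or.inr hjw
  -- attachment point
  have hatt : ∀ w ∈ OUT, ∀ x : ι, x ∈ f w → x ∈ VS → f w ∩ VS = {x} := by
    intro w hw x hxw hxVS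
    obtain ⟨x0, u, hx0, _, _, _⟩ := hpt w hw
    have : x ∈ f w ∩ VS := Finset.mem_inter.mpr ⟨hxw, hxVS⟩
    rw [hx0, Finset.mem_singleton] at this
    rw [← this] at hx0
    exact hx0
  -- the other endpoint of an out-edge
  have hother : ∀ w ∈ OUT, ∀ x : ι, x ∈ f w → x ∈ VS →
      ∃ u, u ∉ VS ∧ u ≠ x ∧ f w = {x, u} := by
    intro w hw x hxw hxVS
    obtain ⟨x0, u, hx0, huVS, hne, hfw⟩ := hpt w hw
    have : x ∈ f w ∩ VS := Finset.mem_inter.mpr ⟨hxw, hxVS⟩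
    rw [hx0, Finset.mem_singleton] at this
    subst this
    exact ⟨u, huVS, fun h => hne h.symm, hfw⟩
  -- endpoints of pairs are in VS
  have hxVS : ∀ s ∈ S, ∀ x : ι, x ∈ f s → x ∈ VS := fun s hs x hx => hfsub s hs hx
  -- common vertex for two-sided pairs
  have hcommon : ∀ s ∈ S, ∀ x y : ι, x ≠ y → f s = {x, y} →
      ∀ w1 ∈ OutS s, x ∈ f w1 → ∀ w2 ∈ OutS s, y ∈ f w2 →
      ∃ u, u ∉ VS ∧ (∀ w ∈ OutS s, u ∈ f w) := by
    intro s hs x y hxy hfs w1 hw1 hxw1 w2 hw2 hyw2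
    have hxV : x ∈ VS := hxVS s hs x (by rw [hfs]; simp)
    have hyV : y ∈ VS := hxVS s hs y (by rw [hfs]; simp)
    obtain ⟨u1, hu1V, hu1x, hfw1⟩ := hother w1 (hOutOUT s hs w1 hw1) x hxw1 hxV
    obtain ⟨u2, hu2V, hu2y, hfw2⟩ := hother w2 (hOutOUT s hs w2 hw2) y hyw2 hyV
    have h1 : f w1 ∩ VS = {x} := hatt w1 (hOutOUT s hs w1 hw1) x hxw1 hxV
    have h2' : f w2 ∩ VS = {y} := hatt w2 (hOutOUT s hs w2 hw2) y hyw2 hyV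
    have hnd := hE2 s hs w1 hw1 w2 hw2 x y h1 h2' hxy
    obtain ⟨j, hjw1, hjw2⟩ := Finset.not_disjoint_iff.mp hnd
    rw [hfw1, Finset.mem_insert, Finset.mem_singleton] at hjw1
    rw [hfw2, Finset.mem_insert, Finset.mem_singleton] at hjw2
    have huu : u1 = u2 := by
      rcases hjw1 with rfl | rfl
      · rcases hjw2 with rfl | rfl
        · exact absurd rfl hxy
        · exact absurd hxV hu2V
      · rcases hjw2 with rfl | rfl
        · exact absurd hyV hu1V
        · rfl
    subst huu
    refine ⟨u1, hu1V, ?_⟩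
    intro w hw
    rcases hdich s hs x y hfs w hw with hxw | hyw
    · -- compare with w2
      have hxVw : f w ∩ VS = {x} := hatt w (hOutOUT s hs w hw) x hxw hxV
      obtain ⟨uw, huwV, huwx, hfww⟩ := hother w (hOutOUT s hs w hw) x hxw hxV
      have hnd2 := hE2 s hs w hw w2 hw2 x y hxVw h2' hxy
      obtain ⟨j, hjw, hjw2⟩ := Finset.not_disjoint_iff.mp hnd2
      rw [hfww, Finset.mem_insert, Finset.mem_singleton] at hjw
      rw [hfw2, Finset.mem_insert, Finset.mem_singleton] at hjw2
      rcases hjw with rfl | rfl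
      · rcases hjw2 with rfl | rfl
        · exact absurd rfl hxy
        · exact absurd hxV hu1V
      · rcases hjw2 with rfl | rfl
        · exact absurd hyV huwV
        · rw [hfww]; simp
    · -- compare with w1
      have hyVw : f w ∩ VS = {y} := hatt w (hOutOUT s hs w hw) y hyw hyV
      obtain ⟨uw, huwV, huwy, hfww⟩ := hother w (hOutOUT s hs w hw) y hyw hyV
      have hnd2 := hE2 s hs w1 hw1 w hw x y h1 hyVw hxy
      obtain ⟨j, hjw1, hjw⟩ := Finset.not_disjoint_iff.mp hnd2
      rw [hfw1, Finset.mem_insert, Finset.mem_singleton] at hjw1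
      rw [hfww, Finset.mem_insert, Finset.mem_singleton] at hjw
      rcases hjw1 with rfl | rfl
      · rcases hjw with rfl | rfl
        · exact absurd rfl hxy
        · exact absurd hxV huwV
      · rcases hjw with rfl | rfl
        · exact absurd hyV hu1V
        · rw [hfww]; simp
  -- the out-degree bound
  have hout_le_k : ∀ s ∈ S, (OutS s).card ≤ k := by
    intro s hs
    obtain ⟨x, y, hxy, hfs⟩ := Finset.card_eq_two.mp (h2 s (hSW hs))
    by_cases hx : ∃ w ∈ OutS s, x ∈ f w
    · by_cases hy : ∃ w ∈ OutS s, y ∈ f w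
      · obtain ⟨w1, hw1, hxw1⟩ := hx
        obtain ⟨w2, hw2, hyw2⟩ := hy
        obtain ⟨u, huV, hall⟩ := hcommon s hs x y hxy hfs w1 hw1 hxw1 w2 hw2 hyw2
        calc (OutS s).card ≤ (W.filter fun w => u ∈ f w).card := by
              apply Finset.card_le_card
              intro w hw
              exact Finset.mem_filter.mpr ⟨hOutW s hs w hw, hall w hw⟩
          _ ≤ k := hdeg u
      · push_neg at hy
        calc (OutS s).card ≤ (W.filter fun w => x ∈ f w).card := by
              apply Finset.card_le_card
              intro w hw
              refine Finset.mem_filter.mpr ⟨hOutW s hs w hw, ?_⟩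
              rcases hdich s hs x y hfs w hw with h | h
              · exact h
              · exact absurd h (hy w hw)
          _ ≤ k := hdeg x
    · push_neg at hx
      calc (OutS s).card ≤ (W.filter fun w => y ∈ f w).card := by
            apply Finset.card_le_card
            intro w hw
            refine Finset.mem_filter.mpr ⟨hOutW s hs w hw, ?_⟩
            rcases hdich s hs x y hfs w hw with h | h
            · exact absurd h (hx w hw)
            · exact h
        _ ≤ k := hdeg y
  have hdd2k : ∀ s ∈ S, ∑ i ∈ f s, d i ≤ 2 * k := by
    intro s hs
    obtain ⟨x, y, hxy, hfs⟩ := Finset.card_eq_two.mp (h2 s (hSW hs))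
    rw [hfs, Finset.sum_pair hxy]
    have := hdk x
    have := hdk y
    omega
  -- even case
  have heven : k % 2 = 0 → W.card ≤ 3 * k / 2 * S.card := by
    intro hke
    have hbound : 2 * W.card ≤ 3 * k * S.card := by
      rw [hmaster]
      calc ∑ s ∈ S, ((∑ i ∈ f s, d i) + (OutS s).card)
          ≤ ∑ s ∈ S, (3 * k) := by
            apply Finset.sum_le_sum
            intro s hs
            have := hdd2k s hs
            have := hout_le_k s hs
            omega
        _ = 3 * k * S.card := by rw [Finset.sum_const, smul_eq_mul, mul_comm]
    have h3k : 3 * k = 2 * (3 * k / 2) := by omega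
    rw [h3k, mul_assoc] at hbound
    exact Nat.le_of_mul_le_mul_left hbound (by omega)
  have hodd : k % 2 = 1 → W.card ≤ 3 * k / 2 * S.card := by
    intro hko
    set SU := S.filter (fun s => (∑ i ∈ f s, d i) + (OutS s).card = 3 * k) with hSU
    set SG := S.filter (fun s => ¬((∑ i ∈ f s, d i) + (OutS s).card = 3 * k)) with hSG
    set RED := W.filter
      (fun w => (f w ∩ VS).card = 2 ∧ ∃ s ∈ SU, ¬ Disjoint (f w) (f s) ∧ f w ≠ f s) with hRED
    set RedT : α → Finset α := fun s => RED.filter (fun w => ¬ Disjoint (f w) (f s)) with hRedT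
    set IN : α → Finset α := fun s => W.filter (fun w => f w = f s) with hIN
    have hSUS : SU ⊆ S := Finset.filter_subset _ _
    have hSGS : SG ⊆ S := Finset.filter_subset _ _
    have hREDW : RED ⊆ W := Finset.filter_subset _ _
    have hRedTW : ∀ s, RedT s ⊆ W := fun s => (Finset.filter_subset _ _).trans hREDW
    -- red edges live inside VS
    have hfwVS : ∀ w ∈ RED, f w ⊆ VS := by
      intro w hw
      rw [hRED, Finset.mem_filter] at hw
      have h1 : f w ∩ VS ⊆ f w := Finset.inter_subset_left
      have h2' : (f w).card ≤ (f w ∩ VS).card := by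
        rw [hw.2.1, h2 w hw.1]
      have := Finset.eq_of_subset_of_card_le h1 h2'
      rw [← this]
      exact Finset.inter_subset_right
    -- a red edge touching a pair meets it in exactly one vertex
    have hredcard1 : ∀ s ∈ S, ∀ w ∈ RedT s, (f w ∩ f s).card = 1 := by
      intro s hs w hw
      rw [hRedT, Finset.mem_filter] at hw
      obtain ⟨hwRED, hnd⟩ := hw
      have hwW : w ∈ W := hREDW hwRED
      obtain ⟨j, hjw, hjs⟩ := Finset.not_disjoint_iff.mp hnd
      have h1 : 1 ≤ (f w ∩ f s).card :=
        Finset.card_pos.mpr ⟨j, Finset.mem_inter.mpr ⟨hjw, hjs⟩⟩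
      have hle : (f w ∩ f s).card ≤ 2 := by
        calc (f w ∩ f s).card ≤ (f w).card := Finset.card_le_card Finset.inter_subset_left
          _ = 2 := h2 w hwW
      rcases Nat.lt_or_ge (f w ∩ f s).card 2 with h | h
      · omega
      · exfalso
        have heq : f w = f s := by
          have hsub : f w ∩ f s ⊆ f w := Finset.inter_subset_left
          have := Finset.eq_of_subset_of_card_le hsub (by rw [h2 w hwW]; omega)
          have hsub2 : f w ⊆ f s := by rw [← this]; exact Finset.inter_subset_right
          exact Finset.eq_of_subset_of_card_le hsub2
            (by rw [h2 w hwW, h2 s (hSW hs)])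
        rw [hRED, Finset.mem_filter] at hwRED
        obtain ⟨_, _, su, hsu, hndu, hneu⟩ := hwRED
        have hsuS : su ∈ S := hSUS hsu
        obtain ⟨j', hj'w, hj's⟩ := Finset.not_disjoint_iff.mp hndu
        rw [heq] at hj'w hneu
        exact hneu (huniq hsuS hs hj's hj'w ▸ rfl)
    -- representation of red edge relative to a touched pair
    have hred_att : ∀ s ∈ S, ∀ w ∈ RedT s, ∃ x v s_a, x ∈ f w ∧ x ∈ f s ∧
        s_a ∈ S ∧ s_a ≠ s ∧ v ∈ f s_a ∧ v ∈ f w ∧ v ≠ x ∧ f w = {x, v} := by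
      intro s hs w hw
      obtain ⟨x, hx⟩ := Finset.card_eq_one.mp (hredcard1 s hs w hw)
      have hxm : x ∈ f w ∩ f s := hx ▸ Finset.mem_singleton_self x
      have hxw : x ∈ f w := (Finset.mem_inter.mp hxm).1
      have hxs : x ∈ f s := (Finset.mem_inter.mp hxm).2
      have hwRED : w ∈ RED := by rw [hRedT, Finset.mem_filter] at hw; exact hw.1
      have hwW : w ∈ W := hREDW hwRED
      obtain ⟨a, b, hab, hfw⟩ := Finset.card_eq_two.mp (h2 w hwW)
      have hxab : x = a ∨ x = b := by
        have := hxw; rw [hfw, Finset.mem_insert, Finset.mem_singleton] at this; exact this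
      obtain ⟨v, hvw, hvx, hfw2⟩ : ∃ v, v ∈ f w ∧ v ≠ x ∧ f w = {x, v} := by
        rcases hxab with rfl | rfl
        · exact ⟨b, by rw [hfw]; simp, fun h => hab h.symm, hfw⟩
        · exact ⟨a, by rw [hfw]; simp, fun h => hab h, by rw [hfw]; exact Finset.pair_comm a x⟩
      have hvVS : v ∈ VS := hfwVS w hwRED hvw
      rw [hVS] at hvVS
      obtain ⟨s_a, hsaS, hvsa⟩ := Finset.mem_biUnion.mp hvVS
      refine ⟨x, v, s_a, hxw, hxs, hsaS, ?_, hvsa, hvw, hvx, hfw2⟩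
      intro heq
      rw [heq] at hvsa
      have : v ∈ f w ∩ f s := Finset.mem_inter.mpr ⟨hvw, hvsa⟩
      rw [hx, Finset.mem_singleton] at this
      exact hvx this
    -- a vertex whose edges all are out-edges of s is not on out-edges of other pairs
    have hUdiff : ∀ s ∈ S, ∀ u : ι, (∀ w ∈ W, u ∈ f w → w ∈ OutS s) →
        ∀ s' ∈ S, s' ≠ s → ∀ w' ∈ OutS s', u ∉ f w' := by
      intro s hs u hu s' hs' hne w' hw' huw'
      have hw'W : w' ∈ W := hOutW s' hs' w' hw'
      have : w' ∈ OutS s := hu w' hw'W huw'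
      rw [hOutS, Finset.mem_filter] at this
      exact this.2 (hext s' hs' w' hw' s hs hne.symm)
    -- two non-VS vertices on an out-edge coincide
    have honly : ∀ w ∈ OUT, ∀ u j : ι, u ∈ f w → u ∉ VS → j ∈ f w → j ∉ VS → j = u := by
      intro w hw u j hu huV hj hjV
      obtain ⟨x0, u0, hx0, hu0V, hne0, hfw⟩ := hpt w hw
      have hx0VS : x0 ∈ VS := (Finset.mem_inter.mp (hx0 ▸ Finset.mem_singleton_self x0)).2
      have hu' : u = u0 := by
        have := hu; rw [hfw, Finset.mem_insert, Finset.mem_singleton] at this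
        rcases this with rfl | rfl
        · exact absurd hx0VS huV
        · rfl
      have hj' : j = u0 := by
        have := hj; rw [hfw, Finset.mem_insert, Finset.mem_singleton] at this
        rcases this with rfl | rfl
        · exact absurd hx0VS hjV
        · rfl
      rw [hu', hj']
    -- structure of ugly pairs
    have hugly : ∀ s ∈ SU, ∀ x y : ι, x ≠ y → f s = {x, y} →
        d x = k ∧ d y = k ∧ (OutS s).card = k ∧
        (∃ w1 ∈ OutS s, x ∈ f w1) ∧ (∃ w2 ∈ OutS s, y ∈ f w2) := by
      intro s hsu x y hxy hfs
      rw [hSU, Finset.mem_filter] at hsu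
      obtain ⟨hs, hequ⟩ := hsu
      rw [hfs, Finset.sum_pair hxy] at hequ
      have hdx := hdk x
      have hdy := hdk y
      have hout := hout_le_k s hs
      have hsOUT : s ∉ OUT := by
        rw [hOUT, Finset.mem_filter]
        rintro ⟨hsW, hcard⟩
        have : f s ∩ VS = f s := by
          apply Finset.inter_eq_left.mpr
          exact hfsub s hs
        rw [this, h2 s hsW] at hcard
        omega
      have honeside : ∀ z z' : ι, z ≠ z' → f s = {z, z'} → z' ∈ VS →
          (¬ ∃ w ∈ OutS s, z ∈ f w) → (OutS s).card ≤ d z' - 1 := by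
        intro z z' hzz hfs' hz'V hnz
        push_neg at hnz
        have hsub : OutS s ⊆ (W.filter fun w => z' ∈ f w).erase s := by
          intro w hw
          rw [Finset.mem_erase]
          constructor
          · intro hws
            rw [hws] at hw
            exact hsOUT (hOutOUT s hs s hw)
          · refine Finset.mem_filter.mpr ⟨hOutW s hs w hw, ?_⟩
            rcases hdich s hs z z' hfs' w hw with h | h
            · exact absurd h (hnz w hw)
            · exact h
        have hsmem : s ∈ W.filter fun w => z' ∈ f w :=
          Finset.mem_filter.mpr ⟨hSW hs, by rw [hfs']; simp⟩
        calc (OutS s).card ≤ ((W.filter fun w => z' ∈ f w).erase s).card :=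
              Finset.card_le_card hsub
          _ = d z' - 1 := by rw [Finset.card_erase_of_mem hsmem, hdd]
      constructor
      · omega
      constructor
      · omega
      constructor
      · omega
      constructor
      · by_contra hnx
        have := honeside x y hxy hfs (hxVS s hs y (by rw [hfs]; simp)) hnx
        omega
      · by_contra hny
        have := honeside y x (Ne.symm hxy) (by rw [hfs]; exact Finset.pair_comm x y)
          (hxVS s hs x (by rw [hfs]; simp)) hny
        omega
    -- exclusive outside vertex and auxiliary out-edge for ugly pairs
    have hauxU : ∀ s ∈ SU, ∀ v ∈ f s, ∃ u waux, u ∉ VS ∧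
        (∀ w ∈ W, u ∈ f w → w ∈ OutS s) ∧ waux ∈ OutS s ∧ u ∈ f waux ∧ v ∉ f waux := by
      intro s hsu v hv
      have hs : s ∈ S := hSUS hsu
      obtain ⟨x, y, hxy, hfs⟩ := Finset.card_eq_two.mp (h2 s (hSW hs))
      obtain ⟨hdx, hdy, houtk, ⟨w1, hw1, hxw1⟩, ⟨w2, hw2, hyw2⟩⟩ := hugly s hsu x y hxy hfs
      obtain ⟨u, huV, hall⟩ := hcommon s hs x y hxy hfs w1 hw1 hxw1 w2 hw2 hyw2
      have hexcl : ∀ w ∈ W, u ∈ f w → w ∈ OutS s := by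
        intro w hwW huw
        have hsub : OutS s ⊆ W.filter fun w' => u ∈ f w' := by
          intro w' hw'
          exact Finset.mem_filter.mpr ⟨hOutW s hs w' hw', hall w' hw'⟩
        have heq : OutS s = W.filter fun w' => u ∈ f w' := by
          apply Finset.eq_of_subset_of_card_le hsub
          calc (W.filter fun w' => u ∈ f w').card ≤ k := hdeg u
            _ = (OutS s).card := houtk.symm
        rw [heq]
        exact Finset.mem_filter.mpr ⟨hwW, huw⟩
      have hvxy : v = x ∨ v = y := by
        have := hv; rw [hfs, Finset.mem_insert, Finset.mem_singleton] at this; exact this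
      have hnotmem : ∀ z z' : ι, z ≠ z' → ∀ w ∈ OutS s, z' ∈ f w → z' ∈ VS → z ∈ VS →
          z ∉ f w := by
        intro z z' hzz w hw hz'w hz'V hzV hzw
        have h1 : f w ∩ VS = {z'} := hatt w (hOutOUT s hs w hw) z' hz'w hz'V
        have : z ∈ f w ∩ VS := Finset.mem_inter.mpr ⟨hzw, hzV⟩
        rw [h1, Finset.mem_singleton] at this
        exact hzz this
      have hxV : x ∈ VS := hxVS s hs x (by rw [hfs]; simp)
      have hyV : y ∈ VS := hxVS s hs y (by rw [hfs]; simp)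
      rcases hvxy with rfl | rfl
      · exact ⟨u, w2, huV, hexcl, hw2, hall w2 hw2,
          hnotmem v y hxy w2 hw2 hyw2 hyV hxV⟩
      · exact ⟨u, w1, huV, hexcl, hw1, hall w1 hw1,
          hnotmem v x (Ne.symm hxy) w1 hw1 hxw1 hxV hyV⟩
    -- distinctness from disjointness
    have hneW : ∀ a : α, a ∈ W → ∀ b : α, Disjoint (f a) (f b) → a ≠ b := by
      intro a haW b hdisj heq
      subst heq
      rw [disjoint_self, Finset.bot_eq_empty] at hdisj
      have := h2 a haW
      rw [hdisj] at this
      simp at this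
    -- pairwise disjointness for explicit triples/quadruples
    have hPW3 : ∀ (a b c : α), Disjoint (f a) (f b) → Disjoint (f a) (f c) →
        Disjoint (f b) (f c) →
        ∀ w ∈ ({a, b, c} : Finset α), ∀ w' ∈ ({a, b, c} : Finset α), w ≠ w' →
        Disjoint (f w) (f w') := by
      intro a b c hab hac hbc w hw w' hw' hne
      simp only [Finset.mem_insert, Finset.mem_singleton] at hw hw'
      rcases hw with rfl | rfl | rfl <;> rcases hw' with rfl | rfl | rfl <;>
        first
          | exact absurd rfl hne
          | assumption
          | exact hab.symm
          | exact hac.symm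
          | exact hbc.symm
    have hPW4 : ∀ (a b c e : α), Disjoint (f a) (f b) → Disjoint (f a) (f c) →
        Disjoint (f a) (f e) → Disjoint (f b) (f c) → Disjoint (f b) (f e) →
        Disjoint (f c) (f e) →
        ∀ w ∈ ({a, b, c, e} : Finset α), ∀ w' ∈ ({a, b, c, e} : Finset α), w ≠ w' →
        Disjoint (f w) (f w') := by
      intro a b c e hab hac hae hbc hbe hce w hw w' hw' hne
      simp only [Finset.mem_insert, Finset.mem_singleton] at hw hw'
      rcases hw with rfl | rfl | rfl | rfl <;> rcases hw' with rfl | rfl | rfl | rfl <;>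
        first
          | exact absurd rfl hne
          | assumption
          | exact hab.symm
          | exact hac.symm
          | exact hae.symm
          | exact hbc.symm
          | exact hbe.symm
          | exact hce.symm
    -- SU and SG are disjoint
    have hSUSGne : ∀ s ∈ SG, ∀ s' ∈ SU, s ≠ s' := by
      intro s hs s' hs' heq
      rw [hSG, Finset.mem_filter] at hs
      rw [hSU, Finset.mem_filter] at hs'
      rw [heq] at hs
      exact hs.2 hs'.2
    -- red attachment with prescribed attachment point
    have hred_att' : ∀ s ∈ S, ∀ w ∈ RedT s, ∀ x : ι, x ∈ f w → x ∈ f s →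
        ∃ v s_a, s_a ∈ S ∧ s_a ≠ s ∧ v ∈ f s_a ∧ v ∈ f w ∧ v ≠ x ∧ f w = {x, v} := by
      intro s hs w hw x hxw hxs
      obtain ⟨x0, v, s_a, hx0w, hx0s, hsaS, hsane, hvsa, hvw, hvx0, hfw⟩ := hred_att s hs w hw
      have hxx0 : x = x0 := by
        have h1 := hredcard1 s hs w hw
        exact Finset.card_le_one.mp (by omega) x
          (Finset.mem_inter.mpr ⟨hxw, hxs⟩) x0 (Finset.mem_inter.mpr ⟨hx0w, hx0s⟩)
      subst hxx0
      exact ⟨v, s_a, hsaS, hsane, hvsa, hvw, hvx0, hfw⟩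
    -- the ugly source of a red edge touching a good pair
    have hredsrc : ∀ s ∈ SG, ∀ w ∈ RedT s, ∀ x v : ι, ∀ s_a : α, x ∈ f w → x ∈ f s →
        s_a ∈ S → v ∈ f s_a → v ∈ f w → v ≠ x → s_a ∈ SU := by
      intro s hs w hw x v s_a hxw hxs hsaS hvsa hvw hvx
      have hsS : s ∈ S := hSGS hs
      have hwRED : w ∈ RED := by rw [hRedT, Finset.mem_filter] at hw; exact hw.1
      rw [hRED, Finset.mem_filter] at hwRED
      obtain ⟨hwW, hc2, su, hsu, hndu, hneu⟩ := hwRED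
      obtain ⟨j, hjw, hjsu⟩ := Finset.not_disjoint_iff.mp hndu
      have hfw : f w = {x, v} := by
        have h1 : ({x, v} : Finset ι) ⊆ f w := by
          intro z hz
          rw [Finset.mem_insert, Finset.mem_singleton] at hz
          rcases hz with rfl | rfl
          · exact hxw
          · exact hvw
        apply (Finset.eq_of_subset_of_card_le h1 ?_).symm
        rw [h2 w hwW, Finset.card_insert_of_notMem (by simpa using fun h => hvx h.symm),
          Finset.card_singleton]
      have hjxv : j = x ∨ j = v := by
        rw [hfw, Finset.mem_insert, Finset.mem_singleton] at hjw
        exact hjw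
      rcases hjxv with rfl | rfl
      · exfalso
        exact hSUSGne s hs su hsu (huniq hsS (hSUS hsu) hxs hjsu)
      · have : s_a = su := huniq hsaS (hSUS hsu) hvsa hjsu
        rw [this]
        exact hsu
    -- E-ugly-ugly: a red edge cannot join two ugly pairs
    have hO5 : ∀ w ∈ RED, ∀ s ∈ SU, ∀ s' ∈ SU, s ≠ s' →
        ¬ Disjoint (f w) (f s) → ¬ Disjoint (f w) (f s') → False := by
      intro w hw s hsu s' hsu' hne hnd hnd'
      have hsS : s ∈ S := hSUS hsu
      have hs'S : s' ∈ S := hSUS hsu'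
      have hwRT : w ∈ RedT s := by rw [hRedT, Finset.mem_filter]; exact ⟨hw, hnd⟩
      obtain ⟨x, v, s_c, hxw, hxs, hscS, hscne, hvsc, hvw, hvx, hfw⟩ := hred_att s hsS w hwRT
      -- the second touched pair is s_c, so v ∈ f s'
      have hvs' : v ∈ f s' := by
        obtain ⟨j, hjw, hjs'⟩ := Finset.not_disjoint_iff.mp hnd'
        rw [hfw, Finset.mem_insert, Finset.mem_singleton] at hjw
        rcases hjw with rfl | rfl
        · exact absurd (huniq hs'S hsS hjs' hxs) (Ne.symm hne)
        · exact hjs'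
      obtain ⟨u1, waux1, hu1V, hexcl1, hwaux1, hu1waux1, hxwaux1⟩ := hauxU s hsu x hxs
      obtain ⟨u2, waux2, hu2V, hexcl2, hwaux2, hu2waux2, hvwaux2⟩ := hauxU s' hsu' v hvs'
      have hxV : x ∈ VS := hxVS s hsS x hxs
      have hvV : v ∈ VS := hxVS s' hs'S v hvs'
      have hD1 : Disjoint (f w) (f waux1) := by
        rw [Finset.disjoint_left]
        intro j hj hj'
        rw [hfw, Finset.mem_insert, Finset.mem_singleton] at hj
        rcases hj with rfl | rfl
        · exact hxwaux1 hj'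
        · have : j ∈ f s := htouch_sub s hsS waux1 hwaux1 (Finset.mem_inter.mpr ⟨hj', hvV⟩)
          exact hne (huniq hsS hs'S this hvs')
      have hD2 : Disjoint (f w) (f waux2) := by
        rw [Finset.disjoint_left]
        intro j hj hj'
        rw [hfw, Finset.mem_insert, Finset.mem_singleton] at hj
        rcases hj with rfl | rfl
        · have : j ∈ f s' := htouch_sub s' hs'S waux2 hwaux2 (Finset.mem_inter.mpr ⟨hj', hxV⟩)
          exact hne (huniq hsS hs'S hxs this)
        · exact hvwaux2 hj'
      have hD3 : Disjoint (f waux1) (f waux2) := by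
        rw [Finset.disjoint_left]
        intro j hj hj'
        by_cases hjV : j ∈ VS
        · have h1 : j ∈ f s := htouch_sub s hsS waux1 hwaux1 (Finset.mem_inter.mpr ⟨hj, hjV⟩)
          have h2' : j ∈ f s' := htouch_sub s' hs'S waux2 hwaux2 (Finset.mem_inter.mpr ⟨hj', hjV⟩)
          exact hne (huniq hsS hs'S h1 h2')
        · have hju : j = u1 := honly waux1 (hOutOUT s hsS waux1 hwaux1) u1 j hu1waux1 hu1V hj hjV
          subst hju
          exact hUdiff s hsS j hexcl1 s' hs'S (Ne.symm hne) waux2 hwaux2 hj'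
      have hwW : w ∈ W := hREDW hw
      have hne1 : w ≠ waux1 := hneW w hwW waux1 hD1
      have hne2 : w ≠ waux2 := hneW w hwW waux2 hD2
      have hne3 : waux1 ≠ waux2 := hneW waux1 (hOutW s hsS waux1 hwaux1) waux2 hD3
      have := exch {s, s'} {w, waux1, waux2}
        (by
          intro a ha
          simp only [Finset.mem_insert, Finset.mem_singleton] at ha
          rcases ha with rfl | rfl
          · exact hsS
          · exact hs'S)
        (by
          intro a ha
          simp only [Finset.mem_insert, Finset.mem_singleton] at ha
          rcases ha with rfl | rfl | rfl
          · exact hwW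
          · exact hOutW s hsS a hwaux1
          · exact hOutW s' hs'S a hwaux2)
        (hPW3 w waux1 waux2 hD1 hD2 hD3)
        (by
          intro a ha s'' hs'' hs''P
          simp only [Finset.mem_insert, Finset.mem_singleton] at ha hs''P
          push_neg at hs''P
          rcases ha with rfl | rfl | rfl
          · rw [Finset.disjoint_left]
            intro j hj hj'
            rw [hfw, Finset.mem_insert, Finset.mem_singleton] at hj
            rcases hj with rfl | rfl
            · exact hs''P.1 (huniq hs'' hsS hj' hxs)
            · exact hs''P.2 (huniq hs'' hs'S hj' hvs')
          · exact hext s hsS a hwaux1 s'' hs'' hs''P.1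
          · exact hext s' hs'S a hwaux2 s'' hs'' hs''P.2)
      rw [Finset.card_insert_of_notMem (by simp [hne1, hne2]),
        Finset.card_insert_of_notMem (by simp [hne3]), Finset.card_singleton,
        Finset.card_insert_of_notMem (by simp [hne]), Finset.card_singleton] at this
      omega
    -- E3a: a good pair with a red edge at x has no out-edge at y
    have hE3a : ∀ s ∈ SG, ∀ w₀ ∈ RedT s, ∀ x y : ι, x ∈ f w₀ → x ∈ f s → y ∈ f s →
        x ≠ y → ∀ w₂ ∈ OutS s, y ∈ f w₂ → False := by
      intro s hs w₀ hw₀ x y hxw hxs hys hxy w₂ hw₂ hyw₂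
      have hsS : s ∈ S := hSGS hs
      obtain ⟨v, s_a, hsaS, hsane, hvsa, hvw, hvx, hfw⟩ := hred_att' s hsS w₀ hw₀ x hxw hxs
      have hsaSU : s_a ∈ SU := hredsrc s hs w₀ hw₀ x v s_a hxw hxs hsaS hvsa hvw hvx
      obtain ⟨u, waux, huV, hexcl, hwaux, huwaux, hvwaux⟩ := hauxU s_a hsaSU v hvsa
      have hxV : x ∈ VS := hxVS s hsS x hxs
      have hyV : y ∈ VS := hxVS s hsS y hys
      have hvV : v ∈ VS := hxVS s_a hsaS v hvsa
      have hyatt : f w₂ ∩ VS = {y} := hatt w₂ (hOutOUT s hsS w₂ hw₂) y hyw₂ hyV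
      have hD1 : Disjoint (f w₀) (f waux) := by
        rw [Finset.disjoint_left]
        intro j hj hj'
        rw [hfw, Finset.mem_insert, Finset.mem_singleton] at hj
        rcases hj with rfl | rfl
        · have : j ∈ f s_a := htouch_sub s_a hsaS waux hwaux (Finset.mem_inter.mpr ⟨hj', hxV⟩)
          exact hsane (huniq hsaS hsS this hxs).symm.symm
        · exact hvwaux hj'
      have hD2 : Disjoint (f w₀) (f w₂) := by
        rw [Finset.disjoint_left]
        intro j hj hj'
        rw [hfw, Finset.mem_insert, Finset.mem_singleton] at hj
        rcases hj with rfl | rfl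
        · have : j ∈ f w₂ ∩ VS := Finset.mem_inter.mpr ⟨hj', hxV⟩
          rw [hyatt, Finset.mem_singleton] at this
          exact hxy this
        · have : j ∈ f w₂ ∩ VS := Finset.mem_inter.mpr ⟨hj', hvV⟩
          rw [hyatt, Finset.mem_singleton] at this
          subst this
          exact hsane (huniq hsaS hsS hvsa hys)
      have hD3 : Disjoint (f waux) (f w₂) := by
        rw [Finset.disjoint_left]
        intro j hj hj'
        by_cases hjV : j ∈ VS
        · have h1 : j ∈ f s_a := htouch_sub s_a hsaS waux hwaux (Finset.mem_inter.mpr ⟨hj, hjV⟩)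
          have h2' : j ∈ f w₂ ∩ VS := Finset.mem_inter.mpr ⟨hj', hjV⟩
          rw [hyatt, Finset.mem_singleton] at h2'
          subst h2'
          exact hsane (huniq hsaS hsS h1 hys)
        · have hju : j = u := honly waux (hOutOUT s_a hsaS waux hwaux) u j huwaux huV hj hjV
          subst hju
          exact hUdiff s_a hsaS j hexcl s hsS (Ne.symm hsane) w₂ hw₂ hj'
      have hw₀W : w₀ ∈ W := hRedTW s hw₀
      have hne1 : w₀ ≠ waux := hneW w₀ hw₀W waux hD1
      have hne2 : w₀ ≠ w₂ := hneW w₀ hw₀W w₂ hD2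
      have hne3 : waux ≠ w₂ := hneW waux (hOutW s_a hsaS waux hwaux) w₂ hD3
      have hssane : s ≠ s_a := fun h => hsane h.symm
      have := exch {s, s_a} {w₀, waux, w₂}
        (by
          intro a ha
          simp only [Finset.mem_insert, Finset.mem_singleton] at ha
          rcases ha with rfl | rfl
          · exact hsS
          · exact hsaS)
        (by
          intro a ha
          simp only [Finset.mem_insert, Finset.mem_singleton] at ha
          rcases ha with rfl | rfl | rfl
          · exact hw₀W
          · exact hOutW s_a hsaS a hwaux
          · exact hOutW s hsS a hw₂)
        (hPW3 w₀ waux w₂ hD1 hD2 hD3)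
        (by
          intro a ha s'' hs'' hs''P
          simp only [Finset.mem_insert, Finset.mem_singleton] at ha hs''P
          push_neg at hs''P
          rcases ha with rfl | rfl | rfl
          · rw [Finset.disjoint_left]
            intro j hj hj'
            rw [hfw, Finset.mem_insert, Finset.mem_singleton] at hj
            rcases hj with rfl | rfl
            · exact hs''P.1 (huniq hs'' hsS hj' hxs)
            · exact hs''P.2 (huniq hs'' hsaS hj' hvsa)
          · exact hext s_a hsaS a hwaux s'' hs'' hs''P.2
          · exact hext s hsS a hw₂ s'' hs'' hs''P.1)
      rw [Finset.card_insert_of_notMem (by simp [hne1, hne2]),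
        Finset.card_insert_of_notMem (by simp [hne3]), Finset.card_singleton,
        Finset.card_insert_of_notMem (by simp [hssane]), Finset.card_singleton] at this
      omega
    -- E3b: two red edges at the two endpoints of a good pair have the same ugly source
    have hE3b : ∀ s ∈ SG, ∀ w ∈ RedT s, ∀ w' ∈ RedT s, ∀ x y : ι, x ≠ y →
        x ∈ f w → x ∈ f s → y ∈ f w' → y ∈ f s →
        ∀ s_a ∈ SU, ∀ s_b ∈ SU, ¬ Disjoint (f w) (f s_a) → ¬ Disjoint (f w') (f s_b) →
        s_a = s_b := by
      intro s hs w hw w' hw' x y hxy hxw hxs hyw' hys s_a hsaSU s_b hsbSU hnda hndb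
      by_contra hab
      have hsS : s ∈ S := hSGS hs
      have hsaS : s_a ∈ S := hSUS hsaSU
      have hsbS : s_b ∈ S := hSUS hsbSU
      have hssa : s ≠ s_a := hSUSGne s hs s_a hsaSU
      have hssb : s ≠ s_b := hSUSGne s hs s_b hsbSU
      obtain ⟨v, s_c, hscS, hscne, hvsc, hvw, hvx, hfw⟩ := hred_att' s hsS w hw x hxw hxs
      obtain ⟨v', s_e, hseS, hsene, hv'se, hv'w', hv'y, hfw'⟩ := hred_att' s hsS w' hw' y hyw' hys
      have hvsa : v ∈ f s_a := by
        obtain ⟨j, hjw, hjsa⟩ := Finset.not_disjoint_iff.mp hnda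
        rw [hfw, Finset.mem_insert, Finset.mem_singleton] at hjw
        rcases hjw with rfl | rfl
        · exact absurd (huniq hsS hsaS hxs hjsa) hssa
        · exact hjsa
      have hv'sb : v' ∈ f s_b := by
        obtain ⟨j, hjw, hjsb⟩ := Finset.not_disjoint_iff.mp hndb
        rw [hfw', Finset.mem_insert, Finset.mem_singleton] at hjw
        rcases hjw with rfl | rfl
        · exact absurd (huniq hsS hsbS hys hjsb) hssb
        · exact hjsb
      obtain ⟨u_a, auxa, huaV, hexcla, hauxa, huaauxa, hvauxa⟩ := hauxU s_a hsaSU v hvsa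
      obtain ⟨u_b, auxb, hubV, hexclb, hauxb, hubauxb, hv'auxb⟩ := hauxU s_b hsbSU v' hv'sb
      have hxV : x ∈ VS := hxVS s hsS x hxs
      have hyV : y ∈ VS := hxVS s hsS y hys
      have hvV : v ∈ VS := hxVS s_a hsaS v hvsa
      have hv'V : v' ∈ VS := hxVS s_b hsbS v' hv'sb
      have hD12 : Disjoint (f w) (f w') := by
        rw [Finset.disjoint_left]
        intro j hj hj'
        rw [hfw, Finset.mem_insert, Finset.mem_singleton] at hj
        rw [hfw', Finset.mem_insert, Finset.mem_singleton] at hj'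
        rcases hj with rfl | rfl <;> rcases hj' with rfl | rfl
        · exact hxy rfl
        · exact hssb (huniq hsS hsbS hxs hv'sb)
        · exact hssa (huniq hsS hsaS hys hvsa).symm.symm
        · exact hab (huniq hsaS hsbS hvsa hv'sb)
      have hD13 : Disjoint (f w) (f auxa) := by
        rw [Finset.disjoint_left]
        intro j hj hj'
        rw [hfw, Finset.mem_insert, Finset.mem_singleton] at hj
        rcases hj with rfl | rfl
        · have : j ∈ f s_a := htouch_sub s_a hsaS auxa hauxa (Finset.mem_inter.mpr ⟨hj', hxV⟩)
          exact hssa (huniq hsS hsaS hxs this)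
        · exact hvauxa hj'
      have hD14 : Disjoint (f w) (f auxb) := by
        rw [Finset.disjoint_left]
        intro j hj hj'
        rw [hfw, Finset.mem_insert, Finset.mem_singleton] at hj
        rcases hj with rfl | rfl
        · have : j ∈ f s_b := htouch_sub s_b hsbS auxb hauxb (Finset.mem_inter.mpr ⟨hj', hxV⟩)
          exact hssb (huniq hsS hsbS hxs this)
        · have : j ∈ f s_b := htouch_sub s_b hsbS auxb hauxb (Finset.mem_inter.mpr ⟨hj', hvV⟩)
          exact hab (huniq hsaS hsbS hvsa this)
      have hD23 : Disjoint (f w') (f auxa) := by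
        rw [Finset.disjoint_left]
        intro j hj hj'
        rw [hfw', Finset.mem_insert, Finset.mem_singleton] at hj
        rcases hj with rfl | rfl
        · have : j ∈ f s_a := htouch_sub s_a hsaS auxa hauxa (Finset.mem_inter.mpr ⟨hj', hyV⟩)
          exact hssa (huniq hsS hsaS hys this)
        · have : j ∈ f s_a := htouch_sub s_a hsaS auxa hauxa (Finset.mem_inter.mpr ⟨hj', hv'V⟩)
          exact hab (huniq hsaS hsbS this hv'sb).symm.symm
      have hD24 : Disjoint (f w') (f auxb) := by
        rw [Finset.disjoint_left]
        intro j hj hj'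
        rw [hfw', Finset.mem_insert, Finset.mem_singleton] at hj
        rcases hj with rfl | rfl
        · have : j ∈ f s_b := htouch_sub s_b hsbS auxb hauxb (Finset.mem_inter.mpr ⟨hj', hyV⟩)
          exact hssb (huniq hsS hsbS hys this)
        · exact hv'auxb hj'
      have hD34 : Disjoint (f auxa) (f auxb) := by
        rw [Finset.disjoint_left]
        intro j hj hj'
        by_cases hjV : j ∈ VS
        · have h1 : j ∈ f s_a := htouch_sub s_a hsaS auxa hauxa (Finset.mem_inter.mpr ⟨hj, hjV⟩)
          have h2' : j ∈ f s_b := htouch_sub s_b hsbS auxb hauxb (Finset.mem_inter.mpr ⟨hj', hjV⟩)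
          exact hab (huniq hsaS hsbS h1 h2')
        · have hju : j = u_a :=
            honly auxa (hOutOUT s_a hsaS auxa hauxa) u_a j huaauxa huaV hj hjV
          subst hju
          exact hUdiff s_a hsaS j hexcla s_b hsbS (Ne.symm hab) auxb hauxb hj'
      have hwW : w ∈ W := hRedTW s hw
      have hw'W : w' ∈ W := hRedTW s hw'
      have hne12 : w ≠ w' := hneW w hwW w' hD12
      have hne13 : w ≠ auxa := hneW w hwW auxa hD13
      have hne14 : w ≠ auxb := hneW w hwW auxb hD14
      have hne23 : w' ≠ auxa := hneW w' hw'W auxa hD23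
      have hne24 : w' ≠ auxb := hneW w' hw'W auxb hD24
      have hne34 : auxa ≠ auxb := hneW auxa (hOutW s_a hsaS auxa hauxa) auxb hD34
      have := exch {s, s_a, s_b} {w, w', auxa, auxb}
        (by
          intro a ha
          simp only [Finset.mem_insert, Finset.mem_singleton] at ha
          rcases ha with rfl | rfl | rfl
          · exact hsS
          · exact hsaS
          · exact hsbS)
        (by
          intro a ha
          simp only [Finset.mem_insert, Finset.mem_singleton] at ha
          rcases ha with rfl | rfl | rfl | rfl
          · exact hwW
          · exact hw'W
          · exact hOutW s_a hsaS a hauxa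
          · exact hOutW s_b hsbS a hauxb)
        (hPW4 w w' auxa auxb hD12 hD13 hD14 hD23 hD24 hD34)
        (by
          intro a ha s'' hs'' hs''P
          simp only [Finset.mem_insert, Finset.mem_singleton] at ha hs''P
          push_neg at hs''P
          rcases ha with rfl | rfl | rfl | rfl
          · rw [Finset.disjoint_left]
            intro j hj hj'
            rw [hfw, Finset.mem_insert, Finset.mem_singleton] at hj
            rcases hj with rfl | rfl
            · exact hs''P.1 (huniq hs'' hsS hj' hxs)
            · exact hs''P.2.1 (huniq hs'' hsaS hj' hvsa)
          · rw [Finset.disjoint_left]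
            intro j hj hj'
            rw [hfw', Finset.mem_insert, Finset.mem_singleton] at hj
            rcases hj with rfl | rfl
            · exact hs''P.1 (huniq hs'' hsS hj' hys)
            · exact hs''P.2.2 (huniq hs'' hsbS hj' hv'sb)
          · exact hext s_a hsaS a hauxa s'' hs'' hs''P.2.1
          · exact hext s_b hsbS a hauxb s'' hs'' hs''P.2.2)
      rw [Finset.card_insert_of_notMem (by simp [hne12, hne13, hne14]),
        Finset.card_insert_of_notMem (by simp [hne23, hne24]),
        Finset.card_insert_of_notMem (by simp [hne34]), Finset.card_singleton,
        Finset.card_insert_of_notMem (by simp [hssa, hssb]),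
        Finset.card_insert_of_notMem (by simp [hab]), Finset.card_singleton] at this
      omega
    -- per-vertex classification
    have hclass_sub : ∀ s ∈ S, ∀ x : ι, x ∈ f s →
        ∀ w ∈ W, x ∈ f w → w ∈ IN s ∨ w ∈ (OutS s).filter (fun w => x ∈ f w) ∨
          (f w ∩ VS).card = 2 ∧ ¬ Disjoint (f w) (f s) ∧ f w ≠ f s ∧ x ∈ f w := by
      intro s hs x hxs w hwW hxw
      have h1 := hF1 w hwW
      have h22 := hle2 w hwW
      have hnd : ¬ Disjoint (f w) (f s) :=
        Finset.not_disjoint_iff.mpr ⟨x, hxw, hxs⟩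
      rcases Nat.lt_or_ge (f w ∩ VS).card 2 with hc | hc
      · have hc1 : (f w ∩ VS).card = 1 := by omega
        refine Or.inr (Or.inl ?_)
        rw [Finset.mem_filter]
        refine ⟨?_, hxw⟩
        rw [hOutS, Finset.mem_filter]
        exact ⟨Finset.mem_filter.mpr ⟨hwW, hc1⟩, hnd⟩
      · have hc2 : (f w ∩ VS).card = 2 := by omega
        by_cases heq : f w = f s
        · exact Or.inl (by rw [hIN, Finset.mem_filter]; exact ⟨hwW, heq⟩)
        · exact Or.inr (Or.inr ⟨hc2, hnd, heq, hxw⟩)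
    -- for ugly pairs the third class is exactly red
    have hclassU : ∀ s ∈ SU, ∀ x : ι, x ∈ f s →
        ∀ w ∈ W, x ∈ f w → w ∈ IN s ∨ w ∈ (OutS s).filter (fun w => x ∈ f w) ∨
          w ∈ (RedT s).filter (fun w => x ∈ f w) := by
      intro s hsu x hxs w hwW hxw
      rcases hclass_sub s (hSUS hsu) x hxs w hwW hxw with h | h | ⟨hc2, hnd, hne, _⟩
      · exact Or.inl h
      · exact Or.inr (Or.inl h)
      · refine Or.inr (Or.inr ?_)
        rw [Finset.mem_filter, hRedT, Finset.mem_filter, hRED, Finset.mem_filter]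
        exact ⟨⟨⟨hwW, hc2, s, hsu, hnd, hne⟩, hnd⟩, hxw⟩
    -- disjointness of the three classes
    have hINcard2 : ∀ s ∈ S, ∀ w ∈ IN s, (f w ∩ VS).card = 2 := by
      intro s hs w hw
      rw [hIN, Finset.mem_filter] at hw
      rw [hw.2, Finset.inter_eq_left.mpr (hfsub s hs), h2 s (hSW hs)]
    have hdisIO : ∀ s ∈ S, ∀ w, ¬(w ∈ IN s ∧ w ∈ OutS s) := by
      rintro s hs w ⟨h1, h0⟩
      have := hINcard2 s hs w h1
      have h3 := hOutOUT s hs w h0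
      rw [hOUT, Finset.mem_filter] at h3
      omega
    have hdisIR : ∀ s ∈ S, ∀ w, ¬(w ∈ IN s ∧ w ∈ RedT s) := by
      rintro s hs w ⟨h1, h0⟩
      have := hredcard1 s hs w h0
      rw [hIN, Finset.mem_filter] at h1
      rw [h1.2, Finset.inter_self, h2 s (hSW hs)] at this
      omega
    have hdisOR : ∀ s ∈ S, ∀ w, ¬(w ∈ OutS s ∧ w ∈ RedT s) := by
      rintro s hs w ⟨h1, h0⟩
      have h3 := hOutOUT s hs w h1
      rw [hOUT, Finset.mem_filter] at h3
      rw [hRedT, Finset.mem_filter, hRED, Finset.mem_filter] at h0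
      have := h0.1.2.1
      omega
    -- per-vertex inequality/equality
    have hvert_le : ∀ s ∈ S, ∀ x : ι, x ∈ f s →
        (IN s).card + ((OutS s).filter (fun w => x ∈ f w)).card +
          ((RedT s).filter (fun w => x ∈ f w)).card ≤ d x := by
      intro s hs x hxs
      have hsub : IN s ∪ ((OutS s).filter (fun w => x ∈ f w)) ∪
          ((RedT s).filter (fun w => x ∈ f w)) ⊆ W.filter (fun w => x ∈ f w) := by
        intro w hw
        rcases Finset.mem_union.mp hw with hw | hw
        · rcases Finset.mem_union.mp hw with hw | hw
          · rw [hIN, Finset.mem_filter] at hw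
            refine Finset.mem_filter.mpr ⟨hw.1, ?_⟩
            rw [hw.2]; exact hxs
          · rw [Finset.mem_filter] at hw
            exact Finset.mem_filter.mpr ⟨hOutW s hs w hw.1, hw.2⟩
        · rw [Finset.mem_filter] at hw
          exact Finset.mem_filter.mpr ⟨hRedTW s hw.1, hw.2⟩
      have hd1 : Disjoint (IN s) ((OutS s).filter (fun w => x ∈ f w)) := by
        rw [Finset.disjoint_left]
        intro w hw hw'
        exact hdisIO s hs w ⟨hw, (Finset.mem_filter.mp hw').1⟩
      have hd2 : Disjoint (IN s ∪ (OutS s).filter (fun w => x ∈ f w))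
          ((RedT s).filter (fun w => x ∈ f w)) := by
        rw [Finset.disjoint_left]
        intro w hw hw'
        rcases Finset.mem_union.mp hw with hw | hw
        · exact hdisIR s hs w ⟨hw, (Finset.mem_filter.mp hw').1⟩
        · exact hdisOR s hs w ⟨(Finset.mem_filter.mp hw).1, (Finset.mem_filter.mp hw').1⟩
      calc (IN s).card + ((OutS s).filter (fun w => x ∈ f w)).card +
            ((RedT s).filter (fun w => x ∈ f w)).card
          = (IN s ∪ (OutS s).filter (fun w => x ∈ f w) ∪
              (RedT s).filter (fun w => x ∈ f w)).card := by
            rw [Finset.card_union_of_disjoint hd2, Finset.card_union_of_disjoint hd1]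
        _ ≤ (W.filter (fun w => x ∈ f w)).card := Finset.card_le_card hsub
        _ = d x := by rw [hdd]
    have hvert_eq : ∀ s ∈ SU, ∀ x : ι, x ∈ f s →
        d x = (IN s).card + ((OutS s).filter (fun w => x ∈ f w)).card +
          ((RedT s).filter (fun w => x ∈ f w)).card := by
      intro s hsu x hxs
      have hs : s ∈ S := hSUS hsu
      refine le_antisymm ?_ (hvert_le s hs x hxs)
      have hsub : W.filter (fun w => x ∈ f w) ⊆ IN s ∪ ((OutS s).filter (fun w => x ∈ f w)) ∪
          ((RedT s).filter (fun w => x ∈ f w)) := by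
        intro w hw
        rw [Finset.mem_filter] at hw
        rcases hclassU s hsu x hxs w hw.1 hw.2 with h | h | h
        · exact Finset.mem_union.mpr (Or.inl (Finset.mem_union.mpr (Or.inl h)))
        · exact Finset.mem_union.mpr (Or.inl (Finset.mem_union.mpr (Or.inr h)))
        · exact Finset.mem_union.mpr (Or.inr h)
      calc d x = (W.filter (fun w => x ∈ f w)).card := by rw [hdd]
        _ ≤ (IN s ∪ (OutS s).filter (fun w => x ∈ f w) ∪
              (RedT s).filter (fun w => x ∈ f w)).card := Finset.card_le_card hsub
        _ ≤ _ := by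
            refine le_trans (Finset.card_union_le _ _) ?_
            have := Finset.card_union_le (IN s) ((OutS s).filter (fun w => x ∈ f w))
            omega
    -- splittings of Out and Red over the two endpoints
    have houtsplit : ∀ s ∈ S, ∀ x y : ι, x ≠ y → f s = {x, y} →
        ((OutS s).filter (fun w => x ∈ f w)).card + ((OutS s).filter (fun w => y ∈ f w)).card
          = (OutS s).card := by
      intro s hs x y hxy hfs
      have hxV : x ∈ VS := hxVS s hs x (by rw [hfs]; simp)
      have hyV : y ∈ VS := hxVS s hs y (by rw [hfs]; simp)
      rw [← Finset.card_filter_add_card_filter_not (s := OutS s)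
        (p := fun w => x ∈ f w)]
      congr 1
      congr 1
      apply Finset.filter_congr
      intro w hw
      have hout1 : (f w ∩ VS).card = 1 := by
        have h3 := hOutOUT s hs w hw
        rw [hOUT, Finset.mem_filter] at h3
        exact h3.2
      constructor
      · intro hyw
        intro hxw
        have : ({x, y} : Finset ι) ⊆ f w ∩ VS := by
          intro z hz
          rw [Finset.mem_insert, Finset.mem_singleton] at hz
          rcases hz with rfl | rfl
          · exact Finset.mem_inter.mpr ⟨hxw, hxV⟩
          · exact Finset.mem_inter.mpr ⟨hyw, hyV⟩
        have := Finset.card_le_card this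
        rw [hout1, Finset.card_insert_of_notMem (by simpa using hxy),
          Finset.card_singleton] at this
        omega
      · intro hnx
        rcases hdich s hs x y hfs w hw with h | h
        · exact absurd h hnx
        · exact h
    have hredsplit : ∀ s ∈ S, ∀ x y : ι, x ≠ y → f s = {x, y} →
        ((RedT s).filter (fun w => x ∈ f w)).card + ((RedT s).filter (fun w => y ∈ f w)).card
          = (RedT s).card := by
      intro s hs x y hxy hfs
      rw [← Finset.card_filter_add_card_filter_not (s := RedT s)
        (p := fun w => x ∈ f w)]
      congr 1
      congr 1
      apply Finset.filter_congr
      intro w hw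
      have hw1 := hredcard1 s hs w hw
      have hwW : w ∈ W := hRedTW s hw
      constructor
      · intro hyw hxw
        have hsub : ({x, y} : Finset ι) ⊆ f w ∩ f s := by
          intro z hz
          rw [Finset.mem_insert, Finset.mem_singleton] at hz
          rcases hz with rfl | rfl
          · exact Finset.mem_inter.mpr ⟨hxw, by rw [hfs]; simp⟩
          · exact Finset.mem_inter.mpr ⟨hyw, by rw [hfs]; simp⟩
        have := Finset.card_le_card hsub
        rw [hw1, Finset.card_insert_of_notMem (by simpa using hxy),
          Finset.card_singleton] at this
        omega
      · intro hnx
        have hnd : ¬ Disjoint (f w) (f s) := by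
          rw [hRedT, Finset.mem_filter] at hw
          exact hw.2
        obtain ⟨j, hjw, hjs⟩ := Finset.not_disjoint_iff.mp hnd
        rw [hfs, Finset.mem_insert, Finset.mem_singleton] at hjs
        rcases hjs with rfl | rfl
        · exact absurd hjw hnx
        · exact hjw
    have hIN1 : ∀ s ∈ S, 1 ≤ (IN s).card := by
      intro s hs
      refine Finset.card_pos.mpr ⟨s, ?_⟩
      rw [hIN, Finset.mem_filter]
      exact ⟨hSW hs, rfl⟩
    -- the exact red count at ugly pairs
    have hredU : ∀ s ∈ SU, (RedT s).card + 2 * (IN s).card = k := by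
      intro s hsu
      have hs : s ∈ S := hSUS hsu
      obtain ⟨x, y, hxy, hfs⟩ := Finset.card_eq_two.mp (h2 s (hSW hs))
      obtain ⟨hdx, hdy, houtk, _, _⟩ := hugly s hsu x y hxy hfs
      have hex := hvert_eq s hsu x (by rw [hfs]; simp)
      have hey := hvert_eq s hsu y (by rw [hfs]; simp)
      have hos := houtsplit s hs x y hxy hfs
      have hrs := hredsplit s hs x y hxy hfs
      omega
    have hredU1 : ∀ s ∈ SU, 1 ≤ (RedT s).card ∧ (RedT s).card + 2 ≤ k := by
      intro s hsu
      have h1 := hredU s hsu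
      have h2' := hIN1 s (hSUS hsu)
      omega
    -- the bound for good pairs
    have hgood : ∀ s ∈ SG, (∑ i ∈ f s, d i) + (OutS s).card + (RedT s).card + 1 ≤ 3 * k := by
      intro s hs
      have hsS : s ∈ S := hSGS hs
      obtain ⟨x, y, hxy, hfs⟩ := Finset.card_eq_two.mp (h2 s (hSW hsS))
      have hxs : x ∈ f s := by rw [hfs]; simp
      have hys : y ∈ f s := by rw [hfs]; simp
      have hdds := hdd2k s hsS
      have houts := hout_le_k s hsS
      by_cases hr : (RedT s).card = 0
      · have hne3k : (∑ i ∈ f s, d i) + (OutS s).card ≠ 3 * k := by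
          rw [hSG, Finset.mem_filter] at hs
          exact hs.2
        omega
      · have hattach : ∀ w ∈ RedT s, x ∈ f w ∨ y ∈ f w := by
          intro w hw
          have hnd : ¬ Disjoint (f w) (f s) := by
            rw [hRedT, Finset.mem_filter] at hw
            exact hw.2
          obtain ⟨j, hjw, hjs⟩ := Finset.not_disjoint_iff.mp hnd
          rw [hfs, Finset.mem_insert, Finset.mem_singleton] at hjs
          rcases hjs with rfl | rfl
          · exact Or.inl hjw
          · exact Or.inr hjw
        have caseA : ∀ z z' : ι, z ≠ z' → f s = {z, z'} →
            (∃ w ∈ RedT s, z ∈ f w) → (¬ ∃ w ∈ RedT s, z' ∈ f w) →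
            (∑ i ∈ f s, d i) + (OutS s).card + (RedT s).card + 1 ≤ 3 * k := by
          intro z z' hzz' hfs' hrz hnz'
          have hzs : z ∈ f s := by rw [hfs']; simp
          have hz's : z' ∈ f s := by rw [hfs']; simp
          obtain ⟨w₀, hw₀, hzw₀⟩ := hrz
          have hnoOut : ∀ w₂ ∈ OutS s, z ∈ f w₂ := by
            intro w₂ hw₂
            rcases hdich s hsS z z' hfs' w₂ hw₂ with h | h
            · exact h
            · exact (hE3a s hs w₀ hw₀ z z' hzw₀ hzs hz's hzz' w₂ hw₂ h).elim
          have hredz : ∀ w ∈ RedT s, z ∈ f w := by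
            intro w hw
            have hnd : ¬ Disjoint (f w) (f s) := by
              rw [hRedT, Finset.mem_filter] at hw
              exact hw.2
            obtain ⟨j, hjw, hjs⟩ := Finset.not_disjoint_iff.mp hnd
            rw [hfs', Finset.mem_insert, Finset.mem_singleton] at hjs
            rcases hjs with rfl | rfl
            · exact hjw
            · exact absurd ⟨w, hw, hjw⟩ hnz'
          have heq1 : (OutS s).filter (fun w => z ∈ f w) = OutS s :=
            Finset.filter_true_of_mem hnoOut
          have heq2 : (RedT s).filter (fun w => z ∈ f w) = RedT s :=
            Finset.filter_true_of_mem hredz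
          have hv := hvert_le s hsS z hzs
          rw [heq1, heq2] at hv
          have hIN := hIN1 s hsS
          have hdz := hdk z
          have hdz' := hdk z'
          have hddeq : ∑ i ∈ f s, d i = d z + d z' := by rw [hfs', Finset.sum_pair hzz']
          omega
        by_cases hrx : ∃ w ∈ RedT s, x ∈ f w
        · by_cases hry : ∃ w ∈ RedT s, y ∈ f w
          · -- case B: reds on both sides
            obtain ⟨w₀, hw₀, hxw₀⟩ := hrx
            obtain ⟨w₁, hw₁, hyw₁⟩ := hry
            have hout0 : (OutS s).card = 0 := by
              rw [Finset.card_eq_zero]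
              apply Finset.eq_empty_of_forall_notMem
              intro w₂ hw₂
              rcases hdich s hsS x y hfs w₂ hw₂ with h | h
              · exact hE3a s hs w₁ hw₁ y x hyw₁ hys hxs (Ne.symm hxy) w₂ hw₂ h
              · exact hE3a s hs w₀ hw₀ x y hxw₀ hxs hys hxy w₂ hw₂ h
            have hsrc : ∀ w ∈ RedT s, ∀ z : ι, z ∈ f w → z ∈ f s →
                ∃ s_w ∈ SU, ¬ Disjoint (f w) (f s_w) := by
              intro w hw z hzw hzs
              obtain ⟨v, s_c, hscS, hscne, hvsc, hvw, hvz, hfw⟩ :=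
                hred_att' s hsS w hw z hzw hzs
              exact ⟨s_c, hredsrc s hs w hw z v s_c hzw hzs hscS hvsc hvw hvz,
                Finset.not_disjoint_iff.mpr ⟨v, hvw, hvsc⟩⟩
            obtain ⟨s_a, hsaSU, hnda⟩ := hsrc w₀ hw₀ x hxw₀ hxs
            obtain ⟨s_b, hsbSU, hndb⟩ := hsrc w₁ hw₁ y hyw₁ hys
            have hab : s_a = s_b :=
              hE3b s hs w₀ hw₀ w₁ hw₁ x y hxy hxw₀ hxs hyw₁ hys s_a hsaSU s_b hsbSU hnda hndb
            have hsub : RedT s ⊆ RedT s_a := by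
              intro w hw
              have hwRED : w ∈ RED := by
                rw [hRedT, Finset.mem_filter] at hw
                exact hw.1
              rcases hattach w hw with hjw | hjw
              · obtain ⟨s_w, hswSU, hndw⟩ := hsrc w hw x hjw hxs
                have heqw : s_w = s_b :=
                  hE3b s hs w hw w₁ hw₁ x y hxy hjw hxs hyw₁ hys s_w hswSU s_b hsbSU hndw hndb
                rw [hRedT, Finset.mem_filter]
                refine ⟨hwRED, ?_⟩
                rw [hab, ← heqw]
                exact hndw
              · obtain ⟨s_w, hswSU, hndw⟩ := hsrc w hw y hjw hys
                have heqw : s_a = s_w :=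
                  hE3b s hs w₀ hw₀ w hw x y hxy hxw₀ hxs hjw hys s_a hsaSU s_w hswSU hnda hndw
                rw [hRedT, Finset.mem_filter]
                refine ⟨hwRED, ?_⟩
                rw [heqw]
                exact hndw
            have hle := Finset.card_le_card hsub
            have hka := hredU1 s_a hsaSU
            omega
          · exact caseA x y hxy hfs hrx hry
        · -- all reds at y
          have hry : ∃ w ∈ RedT s, y ∈ f w := by
            obtain ⟨w₀, hw₀⟩ := (Finset.card_pos (s := RedT s)).mp (by omega)
            rcases hattach w₀ hw₀ with h | h
            · exact absurd ⟨w₀, hw₀, h⟩ hrx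
            · exact ⟨w₀, hw₀, h⟩
          exact caseA y x (Ne.symm hxy) (by rw [hfs]; exact Finset.pair_comm x y) hry hrx
    -- every red edge touches exactly one ugly and one good pair
    have hredtwo : ∀ w ∈ RED, (SU.filter fun s => ¬ Disjoint (f w) (f s)).card = 1 ∧
        (SG.filter fun s => ¬ Disjoint (f w) (f s)).card = 1 := by
      intro w hw
      have hwdef := hw
      rw [hRED, Finset.mem_filter] at hwdef
      obtain ⟨hwW, hc2, s_u, hsuSU, hndu, hneu⟩ := hwdef
      have hsuS : s_u ∈ S := hSUS hsuSU
      have hwRT : w ∈ RedT s_u := by rw [hRedT, Finset.mem_filter]; exact ⟨hw, hndu⟩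
      obtain ⟨x, v, s_o, hxw, hxsu, hsoS, hsone, hvso, hvw, hvx, hfw⟩ :=
        hred_att s_u hsuS w hwRT
      have hndo : ¬ Disjoint (f w) (f s_o) := Finset.not_disjoint_iff.mpr ⟨v, hvw, hvso⟩
      have hsoSG : s_o ∈ SG := by
        by_cases hP : (∑ i ∈ f s_o, d i) + (OutS s_o).card = 3 * k
        · exfalso
          have hsoSU : s_o ∈ SU := by rw [hSU, Finset.mem_filter]; exact ⟨hsoS, hP⟩
          exact hO5 w hw s_u hsuSU s_o hsoSU (Ne.symm hsone) hndu hndo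
        · rw [hSG, Finset.mem_filter]; exact ⟨hsoS, hP⟩
      constructor
      · rw [Finset.card_eq_one]
        refine ⟨s_u, ?_⟩
        ext s'
        simp only [Finset.mem_filter, Finset.mem_singleton]
        constructor
        · rintro ⟨hs'SU, hnd'⟩
          obtain ⟨j, hjw, hjs'⟩ := Finset.not_disjoint_iff.mp hnd'
          rw [hfw, Finset.mem_insert, Finset.mem_singleton] at hjw
          rcases hjw with rfl | rfl
          · exact huniq (hSUS hs'SU) hsuS hjs' hxsu
          · exfalso
            exact (hSUSGne s_o hsoSG s' hs'SU)
              (huniq (hSUS hs'SU) hsoS hjs' hvso).symm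
        · rintro rfl
          exact ⟨hsuSU, hndu⟩
      · rw [Finset.card_eq_one]
        refine ⟨s_o, ?_⟩
        ext s'
        simp only [Finset.mem_filter, Finset.mem_singleton]
        constructor
        · rintro ⟨hs'SG, hnd'⟩
          obtain ⟨j, hjw, hjs'⟩ := Finset.not_disjoint_iff.mp hnd'
          rw [hfw, Finset.mem_insert, Finset.mem_singleton] at hjw
          rcases hjw with rfl | rfl
          · exfalso
            exact (hSUSGne s' hs'SG s_u hsuSU) (huniq (hSGS hs'SG) hsuS hjs' hxsu)
          · exact huniq (hSGS hs'SG) hsoS hjs' hvso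
        · rintro rfl
          exact ⟨hsoSG, hndo⟩
    -- sum the red incidences over ugly and good pairs
    have hswap : ∀ T : Finset α, (∀ w ∈ RED, (T.filter fun s => ¬ Disjoint (f w) (f s)).card = 1)
        → ∑ s ∈ T, (RedT s).card = RED.card := by
      intro T hT
      calc ∑ s ∈ T, (RedT s).card
          = ∑ s ∈ T, ∑ w ∈ RED, if ¬ Disjoint (f w) (f s) then 1 else 0 := by
            simp_rw [hRedT, Finset.card_filter]
        _ = ∑ w ∈ RED, ∑ s ∈ T, if ¬ Disjoint (f w) (f s) then 1 else 0 := Finset.sum_comm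
        _ = ∑ w ∈ RED, (T.filter fun s => ¬ Disjoint (f w) (f s)).card := by
            simp_rw [Finset.card_filter]
        _ = ∑ w ∈ RED, 1 := Finset.sum_congr rfl hT
        _ = RED.card := (Finset.card_eq_sum_ones _).symm
    have hsumSU : ∑ s ∈ SU, (RedT s).card = RED.card :=
      hswap SU (fun w hw => (hredtwo w hw).1)
    have hsumSG : ∑ s ∈ SG, (RedT s).card = RED.card :=
      hswap SG (fun w hw => (hredtwo w hw).2)
    -- assembling everything
    have hsplitS : ∑ s ∈ S, ((∑ i ∈ f s, d i) + (OutS s).card)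
        = ∑ s ∈ SU, ((∑ i ∈ f s, d i) + (OutS s).card)
          + ∑ s ∈ SG, ((∑ i ∈ f s, d i) + (OutS s).card) := by
      rw [hSU, hSG, ← Finset.sum_filter_add_sum_filter_not S
        (fun s => (∑ i ∈ f s, d i) + (OutS s).card = 3 * k)]
    have hsumSUval : ∑ s ∈ SU, ((∑ i ∈ f s, d i) + (OutS s).card) = 3 * k * SU.card := by
      have hterm : ∀ s ∈ SU, (∑ i ∈ f s, d i) + (OutS s).card = 3 * k := by
        intro s hs
        rw [hSU, Finset.mem_filter] at hs
        exact hs.2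
      rw [Finset.sum_congr rfl hterm, Finset.sum_const, smul_eq_mul, mul_comm]
    have hBB : ∑ s ∈ SG, ((∑ i ∈ f s, d i) + (OutS s).card) + RED.card
        ≤ (3 * k - 1) * SG.card := by
      rw [← hsumSG, ← Finset.sum_add_distrib]
      calc ∑ s ∈ SG, ((∑ i ∈ f s, d i) + (OutS s).card + (RedT s).card)
          ≤ ∑ s ∈ SG, (3 * k - 1) := by
            apply Finset.sum_le_sum
            intro s hs
            have := hgood s hs
            omega
        _ = (3 * k - 1) * SG.card := by rw [Finset.sum_const, smul_eq_mul, mul_comm]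
    have hSUle : SU.card ≤ RED.card := by
      rw [← hsumSU]
      calc SU.card = ∑ _s ∈ SU, 1 := Finset.card_eq_sum_ones _
        _ ≤ ∑ s ∈ SU, (RedT s).card :=
            Finset.sum_le_sum (fun s hs => (hredU1 s hs).1)
    have hcards : SU.card + SG.card = S.card := by
      rw [hSU, hSG,
        Finset.card_filter_add_card_filter_not]
    have hkey : 2 * W.card + SU.card ≤ 3 * k * SU.card + (3 * k - 1) * SG.card := by
      calc 2 * W.card + SU.card ≤ 2 * W.card + RED.card := by omega
        _ = 3 * k * SU.card + (∑ s ∈ SG, ((∑ i ∈ f s, d i) + (OutS s).card) + RED.card) := by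
            rw [hmaster, hsplitS, hsumSUval]
            ring
        _ ≤ 3 * k * SU.card + (3 * k - 1) * SG.card := Nat.add_le_add_left hBB _
    have hmul : 3 * k * SU.card = (3 * k - 1) * SU.card + SU.card := by
      have h31 : 3 * k - 1 + 1 = 3 * k := by omega
      calc 3 * k * SU.card = (3 * k - 1 + 1) * SU.card := by rw [h31]
        _ = (3 * k - 1) * SU.card + SU.card := by rw [add_mul, one_mul]
    have h2W : 2 * W.card ≤ (3 * k - 1) * S.card := by
      rw [hmul] at hkey
      have h1 : 2 * W.card + SU.card
          ≤ ((3 * k - 1) * SU.card + (3 * k - 1) * SG.card) + SU.card := by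
        calc 2 * W.card + SU.card
            ≤ (3 * k - 1) * SU.card + SU.card + (3 * k - 1) * SG.card := hkey
          _ = ((3 * k - 1) * SU.card + (3 * k - 1) * SG.card) + SU.card := by ring
      have h2' := Nat.add_le_add_iff_right.mp h1
      calc 2 * W.card ≤ (3 * k - 1) * SU.card + (3 * k - 1) * SG.card := h2'
        _ = (3 * k - 1) * (SU.card + SG.card) := by rw [mul_add]
        _ = (3 * k - 1) * S.card := by rw [hcards]
    have hfin : 3 * k - 1 = 2 * (3 * k / 2) := by omega
    rw [hfin, mul_assoc] at h2W
    exact Nat.le_of_mul_le_mul_left h2W (by omega)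
  rcases Nat.mod_two_eq_zero_or_one k with h | h
  · exact heven h
  · exact hodd h

end Matching



/-- For `k ≥ 2`, a `k`-uniform hypergraph on `n` vertices with `m` edges in
which every vertex has degree `1` or `2` has exactly `k·m - n` vertices of
degree `2`, and consequently satisfies
`τ(H) ≤ (n + ⌊k/2⌋·m)/⌊3k/2⌋` (for `k` even and `k` odd alike). -/
theorem stmt16 {V : Type*} [DecidableEq V] (k n m : ℕ) (hk : 2 ≤ k)
    (H : FinHypergraph V) (huni : H.Uniform k)
    (hn : H.verts.card = n) (hm : H.numEdges = m)
    (hdeg : ∀ v ∈ H.verts, H.degree v = 1 ∨ H.degree v = 2) :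
    (H.verts.filter fun v => H.degree v = 2).card = k * m - n ∧
      (H.tau : ℚ) ≤ ((n : ℚ) + ((k / 2 : ℕ) : ℚ) * (m : ℚ)) / ((3 * k / 2 : ℕ) : ℚ) := by
  subst hn hm
  set m := H.numEdges with hm
  -- degree sum identity
  have hsum : ∑ v ∈ H.verts, H.degree v = k * m := by
    unfold FinHypergraph.degree
    calc ∑ v ∈ H.verts, (Finset.univ.filter fun i => v ∈ H.edge i).card
        = ∑ v ∈ H.verts, ∑ i : Fin m, if v ∈ H.edge i then 1 else 0 := by
          refine Finset.sum_congr rfl fun v _ => ?_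
          rw [Finset.card_filter]
      _ = ∑ i : Fin m, ∑ v ∈ H.verts, if v ∈ H.edge i then 1 else 0 := Finset.sum_comm
      _ = ∑ i : Fin m, (H.edge i).card := by
          refine Finset.sum_congr rfl fun i _ => ?_
          rw [← Finset.card_filter]
          congr 1
          rw [Finset.filter_mem_eq_inter, Finset.inter_eq_right.mpr (H.edge_sub i)]
      _ = k * m := by
          have : ∀ i ∈ (Finset.univ : Finset (Fin m)), (H.edge i).card = k := fun i _ => huni i
          rw [Finset.sum_congr rfl this, Finset.sum_const, Finset.card_univ, Fintype.card_fin,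
            smul_eq_mul, mul_comm]
  set W := H.verts.filter fun v => H.degree v = 2 with hW
  set W1 := H.verts.filter fun v => H.degree v = 1 with hW1
  have hW2 : W = H.verts.filter (fun v => ¬ H.degree v = 1) := by
    rw [hW]
    apply Finset.filter_congr
    intro v hv
    rcases hdeg v hv with h | h <;> simp [h]
  have hsplitc : W1.card + W.card = H.verts.card := by
    rw [hW1, hW2, Finset.card_filter_add_card_filter_not (p := fun v => H.degree v = 1)]
  have hsplits : W1.card + 2 * W.card = k * m := by
    rw [← hsum]
    have : ∑ v ∈ H.verts, H.degree v = ∑ v ∈ W1, H.degree v + ∑ v ∈ W, H.degree v := by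
      rw [hW1, hW2, ← Finset.sum_filter_add_sum_filter_not H.verts (fun v => H.degree v = 1)]
    rw [this]
    have h1 : ∑ v ∈ W1, H.degree v = W1.card := by
      rw [Finset.card_eq_sum_ones]
      refine Finset.sum_congr rfl fun v hv => ?_
      exact (Finset.mem_filter.mp hv).2
    have h2 : ∑ v ∈ W, H.degree v = 2 * W.card := by
      rw [Finset.sum_congr rfl (fun v hv => (Finset.mem_filter.mp hv).2), Finset.sum_const,
        smul_eq_mul, mul_comm]
    omega
  have hcard2 : W.card = k * m - H.verts.card := by omega
  refine ⟨hcard2, ?_⟩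
  -- apply the matching lemma
  obtain ⟨S, hSW, hSdisj, hScount⟩ := exists_big_matching (ι := Fin m) k hk W
    (fun v => Finset.univ.filter fun i => v ∈ H.edge i)
    (by intro w hw; exact (Finset.mem_filter.mp hw).2)
    (by
      intro i
      calc (W.filter fun w => i ∈ Finset.univ.filter fun j => w ∈ H.edge j).card
          ≤ (H.edge i).card := by
            apply Finset.card_le_card
            intro w hw
            have := (Finset.mem_filter.mp hw).2
            simpa using this
        _ = k := huni i)
  -- build transversal
  have hSv : S ⊆ H.verts := fun v hv => (Finset.mem_filter.mp (hSW hv)).1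
  have hne : ∀ i : Fin m, (H.edge i).Nonempty := fun i => Finset.card_pos.mp (by rw [huni i]; omega)
  set covered : Finset (Fin m) := S.biUnion (fun v => Finset.univ.filter fun i => v ∈ H.edge i)
    with hcov
  have hcovcard : covered.card = 2 * S.card := by
    rw [hcov, Finset.card_biUnion (fun v hv w hw hvw => hSdisj v hv w hw hvw)]
    have : ∀ v ∈ S, (Finset.univ.filter fun i => v ∈ H.edge i).card = 2 :=
      fun v hv => (Finset.mem_filter.mp (hSW hv)).2
    rw [Finset.sum_congr rfl this, Finset.sum_const, smul_eq_mul, mul_comm]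
  set T : Finset V := S ∪ (Finset.univ \ covered).image (fun i => (hne i).choose) with hT
  have hTtrans : H.IsTransversal T := by
    constructor
    · intro v hv
      rcases Finset.mem_union.mp hv with h | h
      · exact hSv h
      · obtain ⟨i, _, rfl⟩ := Finset.mem_image.mp h
        exact H.edge_sub i (hne i).choose_spec
    · intro i
      by_cases hc : i ∈ covered
      · obtain ⟨v, hv, hvi⟩ := Finset.mem_biUnion.mp hc
        exact ⟨v, Finset.mem_inter.mpr ⟨Finset.mem_union_left _ hv, by simpa using hvi⟩⟩
      · refine ⟨(hne i).choose, Finset.mem_inter.mpr ⟨Finset.mem_union_right _ ?_, (hne i).choose_spec⟩⟩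
        exact Finset.mem_image.mpr ⟨i, by simp [hc], rfl⟩
  have hcovle : covered.card ≤ m := by
    simpa using Finset.card_le_card (Finset.subset_univ covered)
  have hTcard : T.card ≤ S.card + (m - 2 * S.card) := by
    calc T.card ≤ S.card + ((Finset.univ \ covered).image (fun i => (hne i).choose)).card :=
          Finset.card_union_le _ _
      _ ≤ S.card + (Finset.univ \ covered).card := by
          gcongr; exact Finset.card_image_le
      _ = S.card + (m - 2 * S.card) := by
          rw [Finset.card_sdiff_of_subset (Finset.subset_univ _)]
          simp [hcovcard]
  have htau : H.tau ≤ S.card + (m - 2 * S.card) := by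
    refine le_trans (Nat.sInf_le ⟨T, hTtrans, rfl⟩) hTcard
  -- final arithmetic
  set a := k / 2 with ha
  have hD : 3 * k / 2 = k + a := by omega
  have h2s : H.tau + S.card ≤ m := by omega
  have hc2 : k * m = H.verts.card + W.card := by omega
  have hs : W.card ≤ (k + a) * S.card := by rw [← hD]; exact hScount
  have hA : (k + a) * (H.tau + S.card) ≤ (k + a) * m := Nat.mul_le_mul_left _ h2s
  have main : (k + a) * H.tau ≤ H.verts.card + a * m := by nlinarith [hA, hs, hc2]
  have hDpos : (0 : ℚ) < ((3 * k / 2 : ℕ) : ℚ) := by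
    have : 3 ≤ 3 * k / 2 := by omega
    exact_mod_cast lt_of_lt_of_le (by norm_num) (Nat.cast_le.mpr this)
  rw [le_div_iff₀ hDpos]
  have : ((H.tau : ℚ)) * ((3 * k / 2 : ℕ) : ℚ) = (((3 * k / 2) * H.tau : ℕ) : ℚ) := by
    push_cast; ring
  rw [this]
  have main' : (3 * k / 2) * H.tau ≤ H.verts.card + a * m := by rw [hD]; exact main
  calc (((3 * k / 2) * H.tau : ℕ) : ℚ) ≤ ((H.verts.card + a * m : ℕ) : ℚ) := by
        exact_mod_cast main'
    _ = (H.verts.card : ℚ) + ((a : ℕ) : ℚ) * (m : ℚ) := by push_cast; ring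
end

section
/- For k ≥ 2 and d ∈ {2, 3}, let H be a connected k-uniform hypergraph in which every vertex has degree 1 or 2, and let G be the multigraph whose vertices are the edges of H and which has one edge joining e and f for every degree-2 vertex of H contained in both e and f. If G is a Shannon multigraph of degree k, then H is isomorphic to the generalized triangle T_k. -/
/-- For `k ≥ 2` (and `d ∈ {2, 3}`), let `H` be a connected `k`-uniform
hypergraph in which every vertex has degree `1` or `2`, and let `G` be the
multigraph whose vertices are the edges of `H`, with one edge joining `e` and
`f` for every degree-`2` vertex of `H` lying in both `e` and `f`. If `G` is a
Shannon multigraph of degree `k`, then `H` is (isomorphic to) the generalized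
triangle `T_k`. -/
theorem stmt17 {V : Type*} [DecidableEq V] (k d : ℕ) (hk : 2 ≤ k)
    (hd : d = 2 ∨ d = 3)
    (H : FinHypergraph V) (huni : H.Uniform k) (hconn : H.Connected)
    (hdeg : ∀ v ∈ H.verts, H.degree v = 1 ∨ H.degree v = 2)
    (G : Multigraph (Fin H.numEdges))
    (hGv : G.verts = Finset.univ)
    (hGm : ∀ i j, i ≠ j → G.mult i j =
      (H.verts.filter fun v =>
        H.degree v = 2 ∧ v ∈ H.edge i ∧ v ∈ H.edge j).card)
    (hShannon : G.IsShannon k) :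
    H.IsTk k := by
  classical
  obtain ⟨x, y, z, hxy, hxz, hyz, hGverts, hmxy, hmxz, hmyz⟩ := hShannon
  have huniv : (Finset.univ : Finset (Fin H.numEdges)) = {x, y, z} := hGv ▸ hGverts
  have htwo : ∀ (i j : Fin H.numEdges), i ≠ j → ∀ v, v ∈ H.edge i → v ∈ H.edge j →
      H.degree v = 2 := by
    intro i j hij v hvi hvj
    have hv : v ∈ H.verts := H.edge_sub i hvi
    have h2 : 2 ≤ H.degree v := by
      have hsub : ({i, j} : Finset (Fin H.numEdges)) ⊆
          Finset.univ.filter (fun t => v ∈ H.edge t) := by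
        intro t ht
        simp only [Finset.mem_insert, Finset.mem_singleton] at ht
        rcases ht with rfl | rfl <;> simp [hvi, hvj]
      have hc : ({i, j} : Finset (Fin H.numEdges)).card = 2 := by
        rw [Finset.card_insert_of_notMem (by simpa using hij), Finset.card_singleton]
      calc 2 = _ := hc.symm
        _ ≤ _ := Finset.card_le_card hsub
    rcases hdeg v hv with h | h
    · omega
    · exact h
  have htriple : ∀ v, v ∈ H.edge x → v ∈ H.edge y → v ∈ H.edge z → False := by
    intro v hvx hvy hvz
    have h3 : 3 ≤ H.degree v := by
      have hsub : ({x, y, z} : Finset (Fin H.numEdges)) ⊆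
          Finset.univ.filter (fun t => v ∈ H.edge t) := by
        intro t ht
        simp only [Finset.mem_insert, Finset.mem_singleton] at ht
        rcases ht with rfl | rfl | rfl <;> simp [hvx, hvy, hvz]
      have hc : ({x, y, z} : Finset (Fin H.numEdges)).card = 3 := by
        rw [Finset.card_insert_of_notMem (by simp [hxy, hxz]),
          Finset.card_insert_of_notMem (by simpa using hyz), Finset.card_singleton]
      calc 3 = _ := hc.symm
        _ ≤ _ := Finset.card_le_card hsub
    have := htwo x y hxy v hvx hvy
    omega
  have hfilter : ∀ (i j : Fin H.numEdges), i ≠ j →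
      (H.verts.filter (fun v => H.degree v = 2 ∧ v ∈ H.edge i ∧ v ∈ H.edge j)) =
        H.edge i ∩ H.edge j := by
    intro i j hij
    ext v
    simp only [Finset.mem_filter, Finset.mem_inter]
    constructor
    · rintro ⟨-, -, h⟩; exact h
    · rintro ⟨h1, h2⟩
      exact ⟨H.edge_sub i h1, htwo i j hij v h1 h2, h1, h2⟩
  have hiA : (H.edge y ∩ H.edge z).card = (k + 1) / 2 := by
    rw [← hfilter y z hyz, ← hGm y z hyz]; exact hmyz
  have hiB : (H.edge x ∩ H.edge y).card = k / 2 := by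
    rw [← hfilter x y hxy, ← hGm x y hxy]; exact hmxy
  have hiC : (H.edge x ∩ H.edge z).card = k / 2 := by
    rw [← hfilter x z hxz, ← hGm x z hxz]; exact hmxz
  set A := H.edge y ∩ H.edge z with hA
  set B := H.edge x ∩ H.edge y with hB
  set C := H.edge x ∩ H.edge z with hC
  set D := H.edge x \ (B ∪ C) with hD
  have hAB : Disjoint A B := by
    rw [Finset.disjoint_left]
    intro v hv1 hv2
    rw [hA, Finset.mem_inter] at hv1
    rw [hB, Finset.mem_inter] at hv2
    exact htriple v hv2.1 hv1.1 hv1.2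
  have hAC : Disjoint A C := by
    rw [Finset.disjoint_left]
    intro v hv1 hv2
    rw [hA, Finset.mem_inter] at hv1
    rw [hC, Finset.mem_inter] at hv2
    exact htriple v hv2.1 hv1.1 hv1.2
  have hBC : Disjoint B C := by
    rw [Finset.disjoint_left]
    intro v hv1 hv2
    rw [hB, Finset.mem_inter] at hv1
    rw [hC, Finset.mem_inter] at hv2
    exact htriple v hv1.1 hv1.2 hv2.2
  have hAD : Disjoint A D := by
    rw [Finset.disjoint_left]
    intro v hv1 hv2
    rw [hA, Finset.mem_inter] at hv1
    rw [hD, Finset.mem_sdiff] at hv2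
    exact htriple v hv2.1 hv1.1 hv1.2
  have hBD : Disjoint B D := by
    rw [hD]
    exact Finset.sdiff_disjoint.symm.mono_left Finset.subset_union_left
  have hCD : Disjoint C D := by
    rw [hD]
    exact Finset.sdiff_disjoint.symm.mono_left Finset.subset_union_right
  have hey : H.edge y = A ∪ B := by
    have hsub : A ∪ B ⊆ H.edge y := by
      rw [hA, hB]
      exact Finset.union_subset Finset.inter_subset_left Finset.inter_subset_right
    have hcard : (A ∪ B).card = k := by
      rw [Finset.card_union_of_disjoint hAB, hiA, hiB]; omega
    exact (Finset.eq_of_subset_of_card_le hsub (by rw [hcard, huni y])).symm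
  have hez : H.edge z = A ∪ C := by
    have hsub : A ∪ C ⊆ H.edge z := by
      rw [hA, hC]
      exact Finset.union_subset Finset.inter_subset_right Finset.inter_subset_right
    have hcard : (A ∪ C).card = k := by
      rw [Finset.card_union_of_disjoint hAC, hiA, hiC]; omega
    exact (Finset.eq_of_subset_of_card_le hsub (by rw [hcard, huni z])).symm
  have hBCsub : B ∪ C ⊆ H.edge x := by
    rw [hB, hC]
    exact Finset.union_subset Finset.inter_subset_left Finset.inter_subset_left
  have hex : H.edge x = B ∪ C ∪ D := by
    rw [hD, Finset.union_sdiff_of_subset hBCsub]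
  have hDcard : D.card = (k + 1) / 2 - k / 2 := by
    rw [hD, Finset.card_sdiff_of_subset hBCsub, Finset.card_union_of_disjoint hBC, hiB, hiC, huni x]
    omega
  have hmem3 : ∀ i : Fin H.numEdges, i = x ∨ i = y ∨ i = z := by
    intro i
    have : i ∈ ({x, y, z} : Finset (Fin H.numEdges)) := huniv ▸ Finset.mem_univ i
    simpa using this
  have hverts : H.verts = A ∪ B ∪ C ∪ D := by
    apply Finset.Subset.antisymm
    · intro v hv
      have h1 : 1 ≤ H.degree v := by rcases hdeg v hv with h | h <;> omega
      have hex2 : ∃ i, v ∈ H.edge i := by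
        by_contra h
        push_neg at h
        have : H.degree v = 0 := by
          unfold FinHypergraph.degree
          simp [h]
        omega
      obtain ⟨i, hi⟩ := hex2
      rcases hmem3 i with rfl | rfl | rfl
      · rw [hex] at hi; simp only [Finset.mem_union] at hi ⊢; tauto
      · rw [hey] at hi; simp only [Finset.mem_union] at hi ⊢; tauto
      · rw [hez] at hi; simp only [Finset.mem_union] at hi ⊢; tauto
    · have hAs : A ⊆ H.verts := by
        rw [hA]; exact Finset.inter_subset_left.trans (H.edge_sub y)
      have hBs : B ⊆ H.verts := by
        rw [hB]; exact Finset.inter_subset_left.trans (H.edge_sub x)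
      have hCs : C ⊆ H.verts := by
        rw [hC]; exact Finset.inter_subset_left.trans (H.edge_sub x)
      have hDs : D ⊆ H.verts := by
        rw [hD]; exact Finset.sdiff_subset.trans (H.edge_sub x)
      exact Finset.union_subset (Finset.union_subset (Finset.union_subset hAs hBs) hCs) hDs
  have hnum : H.numEdges = 3 := by
    have h1 : (Finset.univ : Finset (Fin H.numEdges)).card = H.numEdges :=
      Finset.card_univ.trans (Fintype.card_fin _)
    have h2 : ({x, y, z} : Finset (Fin H.numEdges)).card = 3 := by
      rw [Finset.card_insert_of_notMem (by simp [hxy, hxz]),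
        Finset.card_insert_of_notMem (by simpa using hyz), Finset.card_singleton]
    rw [← h1, huniv, h2]
  have hmul : (List.ofFn H.edge : Multiset (Finset V)) = {A ∪ B, A ∪ C, B ∪ C ∪ D} := by
    have h1 : (List.ofFn H.edge : Multiset (Finset V)) =
        Multiset.map H.edge (Finset.univ : Finset (Fin H.numEdges)).val := by
      rw [List.ofFn_eq_map]
      rfl
    have hval : ({x, y, z} : Finset (Fin H.numEdges)).val = (x ::ₘ y ::ₘ {z}) := by
      rw [Finset.insert_val_of_notMem (by simp [hxy, hxz]),
        Finset.insert_val_of_notMem (by simpa using hyz)]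
      rfl
    rw [h1, huniv, hval, Multiset.map_cons, Multiset.map_cons, Multiset.map_singleton,
      hex, hey, hez]
    show (B ∪ C ∪ D) ::ₘ (A ∪ B) ::ₘ {A ∪ C} = (A ∪ B) ::ₘ (A ∪ C) ::ₘ {B ∪ C ∪ D}
    rw [Multiset.cons_swap (B ∪ C ∪ D) (A ∪ B)]
    congr 1
    exact Multiset.pair_comm _ _
  exact ⟨A, B, C, D, hiA, hiB, hiC, hDcard, hAB, hAC, hAD, hBC, hBD, hCD, hverts, hnum, hmul⟩
end
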